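/- arXiv:1507.07522 — 2 statements merged into one kernel-verified Lean document; each statement's English description precedes it below -/
import Mathlib

section
/- Let 0<p<1. There exist a function f∈L_p, a function g∈L_p, a sequence of trigonometric polynomials T_n∈𝒯_n (n∈ℕ), and a constant C_f>0 such that ‖f−T_n‖_p → 0 and ‖g−T_n'‖_p → 0 as n→∞, yet ‖f−T_n‖_{H_p^{1,1}} ≥ C_f for all sufficiently large n. -/
open MeasureTheory Real Filter
open scoped ENNReal NNReal Topology

noncomputable section

/-- The (quasi-)norm of `L_p(𝕋)`, `0 < p ≤ ∞`, for `2π`-periodic functions. -/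
def LpNorm (p : ℝ≥0∞) (f : ℝ → ℂ) : ℝ :=
  if p = ⊤ then sSup (Set.range fun x => ‖f x‖)
  else ((2 * π)⁻¹ * ∫ x in (0:ℝ)..(2 * π), ‖f x‖ ^ p.toReal) ^ (p.toReal)⁻¹

/-- Membership in `L_p(𝕋)`: `2π`-periodic, and continuous (if `p = ∞`) or
measurable with `|f|^p` integrable over a period (if `p < ∞`). -/
def MemLp' (p : ℝ≥0∞) (f : ℝ → ℂ) : Prop :=
  Function.Periodic f (2 * π) ∧
    (if p = ⊤ then Continuous f
     else Measurable f ∧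
       IntervalIntegrable (fun x => ‖f x‖ ^ p.toReal) volume 0 (2 * π))

/-- The `r`-th forward difference `Δ_h^r f`. -/
def delta (h : ℝ) (r : ℕ) (f : ℝ → ℂ) : ℝ → ℂ :=
  fun x => ∑ ν ∈ Finset.range (r + 1), (-1 : ℂ) ^ ν * (r.choose ν : ℂ) * f (x + (ν : ℝ) * h)

/-- The modulus of smoothness `ω_k(f,t)_p = sup_{0<h≤t} ‖Δ_h^k f‖_p`. -/
def omega' (p : ℝ≥0∞) (k : ℕ) (f : ℝ → ℂ) (t : ℝ) : ℝ :=
  ⨆ h : {h : ℝ // 0 < h ∧ h ≤ t}, LpNorm p (delta h.1 k f)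

/-- The Hölder seminorm `|f|_{H_p^{r,α}} = sup_{h>0} h^{-α} ‖Δ_h^r f‖_p`. -/
def holderSemi (p : ℝ≥0∞) (r : ℕ) (α : ℝ) (f : ℝ → ℂ) : ℝ :=
  ⨆ h : {h : ℝ // 0 < h}, LpNorm p (delta h.1 r f) / h.1 ^ α

/-- The Hölder norm `‖f‖_{H_p^{r,α}}`. -/
def holderNorm (p : ℝ≥0∞) (r : ℕ) (α : ℝ) (f : ℝ → ℂ) : ℝ :=
  LpNorm p f + holderSemi p r α f

/-- Membership in the Hölder space `H_p^{r,α}`. -/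
def MemHolderSp (p : ℝ≥0∞) (r : ℕ) (α : ℝ) (f : ℝ → ℂ) : Prop :=
  MemLp' p f ∧
    BddAbove (Set.range fun h : {h : ℝ // 0 < h} => LpNorm p (delta h.1 r f) / h.1 ^ α)

/-- `T` is a trigonometric polynomial of degree at most `n`. -/
def IsTrigPoly (n : ℕ) (T : ℝ → ℂ) : Prop :=
  ∃ c : ℤ → ℂ, ∀ x : ℝ,
    T x = ∑ ν ∈ Finset.Icc (-(n : ℤ)) (n : ℤ), c ν * Complex.exp (Complex.I * ν * x)

/-- Best approximation `E_n(f)_p` by trigonometric polynomials of degree at most `n`. -/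
def bestApprox (p : ℝ≥0∞) (n : ℕ) (f : ℝ → ℂ) : ℝ :=
  sInf {y : ℝ | ∃ T, IsTrigPoly n T ∧ y = LpNorm p (fun x => f x - T x)}

/-- Best approximation `E_n(f)_{H_p^{r,α}}` in the Hölder space. -/
def bestApproxH (p : ℝ≥0∞) (r : ℕ) (α : ℝ) (n : ℕ) (f : ℝ → ℂ) : ℝ :=
  sInf {y : ℝ | ∃ T, IsTrigPoly n T ∧ y = holderNorm p r α (fun x => f x - T x)}

/-- `θ_{k,α}(f,δ)_p = sup_{0<h≤δ} h^{-α} ω_k(f,h)_p`. -/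
def theta (p : ℝ≥0∞) (k : ℕ) (α : ℝ) (f : ℝ → ℂ) (δ : ℝ) : ℝ :=
  ⨆ h : {h : ℝ // 0 < h ∧ h ≤ δ}, omega' p k f h.1 / h.1 ^ α

/-- `ψ_{k,r,α}(f,δ)_p = sup_{0<h≤δ} h^{-α} ω_k(Δ_h^r f, δ)_p`. -/
def psi (p : ℝ≥0∞) (k r : ℕ) (α : ℝ) (f : ℝ → ℂ) (δ : ℝ) : ℝ :=
  ⨆ h : {h : ℝ // 0 < h ∧ h ≤ δ}, omega' p k (delta h.1 r f) δ / h.1 ^ α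

/-- `p₁ = min(p,1)` (as a real exponent). -/
def p1 (p : ℝ≥0∞) : ℝ := if p = ⊤ then 1 else min p.toReal 1

/-- Condition (*): `(∫_0^δ (t^{-α} ω_{r+k}(f,t)_p)^{p₁} dt/t)^{1/p₁} ≤ C₀ δ^{-α} ω_{r+k}(f,δ)_p`
for all `0 < δ < 1`. -/
def condStar (p : ℝ≥0∞) (r k : ℕ) (α C₀ : ℝ) (f : ℝ → ℂ) : Prop :=
  ∀ δ : ℝ, 0 < δ → δ < 1 →
    (∫ t in (0:ℝ)..δ, (omega' p (r + k) f t / t ^ α) ^ (p1 p) / t) ^ (p1 p)⁻¹ ≤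
      C₀ * (omega' p (r + k) f δ / δ ^ α)

/-- `g˜_n(λ) = (4n+1)⁻¹ Σ_{j=0}^{4n} g(t_j + λ)`, `t_j = 2πj/(4n+1)`. -/
def tilde (n : ℕ) (g : ℝ → ℂ) : ℝ → ℂ :=
  fun lam => ((4 * n + 1 : ℕ) : ℂ)⁻¹ *
    ∑ j ∈ Finset.range (4 * n + 1), g (2 * π * (j : ℝ) / (4 * (n : ℝ) + 1) + lam)

/-- `K` is a sequence of kernels `K_n(x) = Σ_{ν=-n}^n a_{ν,n} e^{iνx}` with `a_{0,n} = 1`. -/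
def IsKernel (K : ℕ → ℝ → ℂ) : Prop :=
  ∀ n : ℕ, ∃ a : ℤ → ℂ, a 0 = 1 ∧
    ∀ x : ℝ, K n x = ∑ ν ∈ Finset.Icc (-(n : ℤ)) (n : ℤ), a ν * Complex.exp (Complex.I * ν * x)

/-- The family of linear polynomial means
`L_{n,λ}(f,x) = (4n+1)⁻¹ Σ_{j=0}^{4n} f(t_j+λ) K_n(x - t_j - λ)`. -/
def Lmean (K : ℕ → ℝ → ℂ) (n : ℕ) (lam : ℝ) (f : ℝ → ℂ) : ℝ → ℂ :=
  fun x => ((4 * n + 1 : ℕ) : ℂ)⁻¹ *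
    ∑ j ∈ Finset.range (4 * n + 1),
      f (2 * π * (j : ℝ) / (4 * (n : ℝ) + 1) + lam) *
        K n (x - 2 * π * (j : ℝ) / (4 * (n : ℝ) + 1) - lam)

/-- The mixed norm `‖g‖_{p̄}` in both the main variable `x` and the parameter `λ`. -/
def LpBarNorm (p : ℝ≥0∞) (g : ℝ → ℝ → ℂ) : ℝ :=
  if p = ⊤ then sSup (Set.range fun q : ℝ × ℝ => ‖g q.1 q.2‖)
  else ((2 * π)⁻¹ *
    ∫ lam in (0:ℝ)..(2 * π), (LpNorm p (fun x => g x lam)) ^ p.toReal) ^ (p.toReal)⁻¹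

/-- The family `{L_{n,λ}}` is bounded in `L_p`. -/
def FamilyBounded (p : ℝ≥0∞) (K : ℕ → ℝ → ℂ) : Prop :=
  ∃ B : ℝ, ∀ n : ℕ, 0 < n → ∀ f : ℝ → ℂ, MemLp' p f →
    LpBarNorm p (fun x lam => Lmean K n lam f x) ≤ B * LpNorm p f

/-- `‖f - L_{n,λ}(f)‖_{p̄}`. -/
def errBar (K : ℕ → ℝ → ℂ) (p : ℝ≥0∞) (n : ℕ) (f : ℝ → ℂ) : ℝ :=
  LpBarNorm p (fun x lam => f x - Lmean K n lam f x)

/-- `‖f - L_{n,λ}(f)‖_{H_{p̄}^{r,α}}`. -/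
def errHolderBar (K : ℕ → ℝ → ℂ) (p : ℝ≥0∞) (r : ℕ) (α : ℝ) (n : ℕ) (f : ℝ → ℂ) : ℝ :=
  errBar K p n f + ⨆ h : {h : ℝ // 0 < h},
    LpBarNorm p (fun x lam => delta h.1 r (fun y => f y - Lmean K n lam f y) x) / h.1 ^ α

/-- `w ∈ Ω_p`: a general modulus of smoothness. -/
def IsOmegaClass (p : ℝ≥0∞) (w : (ℝ → ℂ) → ℝ → ℝ) : Prop :=
  ∃ Cw > (0:ℝ),
    (∀ f, MemLp' p f → ∀ δ : ℝ, 0 < δ → 0 ≤ w f δ ∧ w f δ ≤ Cw * LpNorm p f) ∧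
    ∀ f g, MemLp' p f → MemLp' p g → ∀ δ : ℝ, 0 < δ →
      w (fun x => f x + g x) δ ≤ Cw * (w f δ + w g δ)

/-- `w(f,δ)_{H_p^{r,α}} = w(f,δ)_p + sup_{h>0} h^{-α} w(Δ_h^r f, δ)_p`. -/
def wHolder (w : (ℝ → ℂ) → ℝ → ℝ) (r : ℕ) (α : ℝ) (f : ℝ → ℂ) (δ : ℝ) : ℝ :=
  w f δ + ⨆ h : {h : ℝ // 0 < h}, w (delta h.1 r f) δ / h.1 ^ α

/-- Fourier means `L_n(f,x) = ∫_𝕋 f(t) K_n(x-t) dt`. -/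
def Fmean (K : ℕ → ℝ → ℂ) (n : ℕ) (f : ℝ → ℂ) : ℝ → ℂ :=
  fun x => ∫ t in (0:ℝ)..(2 * π), f t * K n (x - t)

end


noncomputable section HFaux
namespace HF

open intervalIntegral

lemma twopi_pos : (0:ℝ) < 2 * π := by positivity

lemma cont_abs_rpow {q : ℝ} (hq : 0 < q) {v : ℝ → ℂ} (hv : Continuous v) :
    Continuous fun x => ‖v x‖ ^ q :=
  (continuous_norm.comp hv).rpow_const fun _ => Or.inr hq.le

variable {p : ℝ≥0∞}

lemma lpnorm_eq (hp : p ≠ ⊤) (v : ℝ → ℂ) :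
    LpNorm p v
      = ((2*π)⁻¹ * ∫ x in (0:ℝ)..(2*π), ‖v x‖ ^ p.toReal) ^ (p.toReal)⁻¹ := by
  simp [LpNorm, hp]

lemma integrand_nonneg (q : ℝ) (v : ℝ → ℂ) :
    0 ≤ ∫ x in (0:ℝ)..(2*π), ‖v x‖ ^ q :=
  intervalIntegral.integral_nonneg twopi_pos.le
    (fun x _ => Real.rpow_nonneg (norm_nonneg _) _)

lemma lpnorm_nonneg (hp : p ≠ ⊤) (v : ℝ → ℂ) : 0 ≤ LpNorm p v := by
  rw [lpnorm_eq hp]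
  exact Real.rpow_nonneg (mul_nonneg (by positivity) (integrand_nonneg _ v)) _

lemma lpnorm_le_bound (hp : p ≠ ⊤) (hq : 0 < p.toReal) {v : ℝ → ℂ} {B : ℝ}
    (hv : Continuous v) (hB : 0 ≤ B) (h : ∀ x, ‖v x‖ ≤ B) : LpNorm p v ≤ B := by
  rw [lpnorm_eq hp]
  have h1 : ∫ x in (0:ℝ)..(2*π), ‖v x‖ ^ p.toReal
      ≤ ∫ x in (0:ℝ)..(2*π), B ^ p.toReal := by
    refine intervalIntegral.integral_mono_on twopi_pos.le
      ((cont_abs_rpow hq hv).intervalIntegrable _ _) (intervalIntegrable_const) ?_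
    exact fun x _ => Real.rpow_le_rpow (norm_nonneg _) (h x) hq.le
  rw [intervalIntegral.integral_const] at h1
  have h2 : (2*π)⁻¹ * ∫ x in (0:ℝ)..(2*π), ‖v x‖ ^ p.toReal ≤ B ^ p.toReal := by
    have h3 : (2*π)⁻¹ * ∫ x in (0:ℝ)..(2*π), ‖v x‖ ^ p.toReal
        ≤ (2*π)⁻¹ * ((2*π - 0) • B ^ p.toReal) := by
      exact mul_le_mul_of_nonneg_left h1 (by positivity)
    have h4 : (2*π)⁻¹ * ((2*π - 0) • B ^ p.toReal) = B ^ p.toReal := by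
      rw [smul_eq_mul, sub_zero, ← mul_assoc, inv_mul_cancel₀ twopi_pos.ne', one_mul]
    linarith
  calc ((2*π)⁻¹ * ∫ x in (0:ℝ)..(2*π), ‖v x‖ ^ p.toReal) ^ (p.toReal)⁻¹
      ≤ (B ^ p.toReal) ^ (p.toReal)⁻¹ :=
        Real.rpow_le_rpow (mul_nonneg (by positivity) (integrand_nonneg _ v)) h2 (by positivity)
    _ = B := by
        rw [← Real.rpow_mul hB, mul_inv_cancel₀ hq.ne', Real.rpow_one]

lemma lpnorm_const_mul (hp : p ≠ ⊤) (hq : 0 < p.toReal) (c : ℂ) (v : ℝ → ℂ) :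
    LpNorm p (fun x => c * v x) = ‖c‖ * LpNorm p v := by
  rw [lpnorm_eq hp, lpnorm_eq hp]
  have hpt' : ∀ x : ℝ, ‖c * v x‖ ^ p.toReal
      = ‖c‖ ^ p.toReal * ‖v x‖ ^ p.toReal := fun x => by
    rw [norm_mul, Real.mul_rpow (norm_nonneg _) (norm_nonneg _)]
  simp only [hpt']
  rw [intervalIntegral.integral_const_mul]
  rw [show (2*π)⁻¹ * (‖c‖ ^ p.toReal * ∫ x in (0:ℝ)..2*π, ‖v x‖ ^ p.toReal)
      = ‖c‖ ^ p.toReal * ((2*π)⁻¹ * ∫ x in (0:ℝ)..2*π, ‖v x‖ ^ p.toReal) by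
        ring]
  rw [Real.mul_rpow (Real.rpow_nonneg (norm_nonneg _) _)
      (mul_nonneg (by positivity) (integrand_nonneg _ v))]
  rw [← Real.rpow_mul (norm_nonneg _), mul_inv_cancel₀ hq.ne', Real.rpow_one]


open intervalIntegral

lemma integral_exp_int (μ : ℤ) (hμ : μ ≠ 0) :
    ∫ x in (0:ℝ)..(2*π), Complex.exp (Complex.I * μ * x) = 0 := by
  have hc : (Complex.I * μ) ≠ 0 :=
    mul_ne_zero Complex.I_ne_zero (by exact_mod_cast hμ)
  have hder : ∀ x ∈ Set.uIcc (0:ℝ) (2*π),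
      HasDerivAt (fun y : ℝ => (Complex.I * μ)⁻¹ * Complex.exp (Complex.I * μ * y))
        (Complex.exp (Complex.I * μ * x)) x := by
    intro x _
    have h1 : HasDerivAt (fun y : ℝ => (y:ℂ)) 1 x := by
      simpa using (hasDerivAt_id x).ofReal_comp
    have h2 : HasDerivAt (fun y : ℝ => Complex.I * μ * y) (Complex.I * μ) x := by
      simpa using h1.const_mul (Complex.I * μ)
    have h4 := (h2.cexp).const_mul ((Complex.I * μ)⁻¹)
    refine h4.congr_deriv ?_
    field_simp
  have hint : IntervalIntegrable (fun x : ℝ => Complex.exp (Complex.I * μ * x))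
      volume 0 (2*π) := by
    apply Continuous.intervalIntegrable
    exact Complex.continuous_exp.comp (by continuity)
  rw [intervalIntegral.integral_eq_sub_of_hasDerivAt hder hint]
  have h5 : Complex.exp (Complex.I * μ * (2 * (π:ℂ))) = 1 := by
    rw [show Complex.I * μ * (2 * (π:ℂ)) = (μ:ℂ) * (2 * (π:ℂ) * Complex.I) by push_cast; ring]
    exact Complex.exp_int_mul_two_pi_mul_I μ
  simp [h5]

lemma cos_pow_int (N s : ℕ) (hN : N ≠ 0) :
    ∫ x in (0:ℝ)..(2*π), (Real.cos ((N:ℝ)*x)) ^ (2*s)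
      = 2*π * ((Nat.centralBinom s : ℝ) / 4^s) := by
  have hpt : ∀ x : ℝ, ((Real.cos ((N:ℝ)*x) : ℝ) : ℂ) ^ (2*s)
      = ∑ l ∈ Finset.range (2*s+1),
          (((2*s).choose l : ℂ) / 4^s)
            * Complex.exp (Complex.I * (((2*(l:ℤ) - 2*s) * N : ℤ)) * x) := by
    intro x
    rw [Complex.ofReal_cos]
    rw [show Complex.cos ((N:ℝ)*x : ℝ)
        = (Complex.exp (((N:ℝ)*x:ℝ) * Complex.I) + Complex.exp (-((N:ℝ)*x:ℝ) * Complex.I)) / 2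
        from rfl]
    rw [div_pow, add_pow]
    rw [Finset.sum_div]
    refine Finset.sum_congr rfl fun l hl => ?_
    have hlK : l ≤ 2*s := Nat.lt_succ_iff.mp (Finset.mem_range.mp hl)
    rw [← Complex.exp_nat_mul, ← Complex.exp_nat_mul, ← Complex.exp_add]
    rw [show ((l:ℂ) * ((((N:ℝ)*x:ℝ):ℂ) * Complex.I)
          + ((2*s-l : ℕ):ℂ) * ((-((N:ℝ)*x:ℝ):ℂ) * Complex.I))
        = Complex.I * (((2*(l:ℤ) - 2*s) * N : ℤ):ℂ) * (x:ℂ) by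
      push_cast [Nat.cast_sub hlK]; ring]
    have h2 : ((2:ℂ) ^ (2*s)) = 4 ^ s := by
      rw [pow_mul]; norm_num
    rw [h2]
    ring
  have key : ∫ x in (0:ℝ)..(2*π), ((Real.cos ((N:ℝ)*x) : ℝ) : ℂ) ^ (2*s)
      = ((2*π * ((Nat.centralBinom s : ℝ) / 4^s) : ℝ) : ℂ) := by
    rw [intervalIntegral.integral_congr (g := fun x => ∑ l ∈ Finset.range (2*s+1),
          (((2*s).choose l : ℂ) / 4^s)
            * Complex.exp (Complex.I * (((2*(l:ℤ) - 2*s) * N : ℤ)) * x))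
        (fun x _ => hpt x)]
    rw [intervalIntegral.integral_finset_sum]
    · rw [Finset.sum_eq_single_of_mem s (by simp [Finset.mem_range]; omega)]
      · have hz : ((2*(s:ℤ) - 2*s) * N : ℤ) = 0 := by ring
        rw [hz]
        simp only [intervalIntegral.integral_const_mul]
        have : (fun x : ℝ => Complex.exp (Complex.I * ((0:ℤ):ℂ) * (x:ℂ)))
            = fun _ : ℝ => (1:ℂ) := by
          funext x; simp
        rw [show ∫ x in (0:ℝ)..(2*π), Complex.exp (Complex.I * ((0:ℤ):ℂ) * (x:ℂ))
            = ∫ x in (0:ℝ)..(2*π), (1:ℂ) from intervalIntegral.integral_congr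
              (fun x _ => by simp)]
        rw [intervalIntegral.integral_const]
        rw [Nat.centralBinom]
        push_cast
        ring_nf
        simp [smul_eq_mul]
        ring
      · intro l hl hne
        have hμ : ((2*(l:ℤ) - 2*s) * N : ℤ) ≠ 0 := by
          apply mul_ne_zero
          · omega
          · exact_mod_cast hN
        rw [intervalIntegral.integral_const_mul, integral_exp_int _ hμ, mul_zero]
    · intro l _
      apply Continuous.intervalIntegrable
      exact continuous_const.mul (Complex.continuous_exp.comp (by continuity))
  have lhs : ∫ x in (0:ℝ)..(2*π), ((Real.cos ((N:ℝ)*x) : ℝ) : ℂ) ^ (2*s)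
      = ((∫ x in (0:ℝ)..(2*π), (Real.cos ((N:ℝ)*x)) ^ (2*s) : ℝ) : ℂ) := by
    rw [← intervalIntegral.integral_ofReal]
    exact intervalIntegral.integral_congr fun x _ => by push_cast; ring
  rw [lhs] at key
  exact_mod_cast key

lemma integral_comp_nat_mul {W : ℝ → ℝ} (hW : Continuous W)
    (hper : Function.Periodic W (2*π)) {N : ℕ} (hN : N ≠ 0) :
    ∫ x in (0:ℝ)..(2*π), W ((N:ℝ)*x) = ∫ t in (0:ℝ)..(2*π), W t := by
  have hNR : (N:ℝ) ≠ 0 := Nat.cast_ne_zero.mpr hN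
  rw [intervalIntegral.integral_comp_mul_left W hNR]
  have h_int : ∀ t₁ t₂ : ℝ, IntervalIntegrable W volume t₁ t₂ :=
    fun t₁ t₂ => hW.intervalIntegrable _ _
  have hz := hper.intervalIntegral_add_zsmul_eq (N:ℤ) 0 h_int
  simp only [zero_add] at hz
  rw [mul_zero, show (N:ℝ)*(2*π) = ((N:ℤ) • (2*π:ℝ)) by push_cast [zsmul_eq_mul]; ring]
  rw [hz]
  rw [zsmul_eq_mul, smul_eq_mul, ← mul_assoc]
  push_cast
  rw [inv_mul_cancel₀ hNR, one_mul]

lemma cb_sq (s : ℕ) : ((Nat.centralBinom s : ℝ)/4^s)^2 * (3*s+1) ≤ 1 := by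
  induction s with
  | zero => simp [Nat.centralBinom]
  | succ n ih =>
    have hkey : ((n:ℝ)+1) * (Nat.centralBinom (n+1) : ℝ)
        = 2*(2*n+1) * (Nat.centralBinom n : ℝ) := by
      exact_mod_cast congrArg (fun k : ℕ => (k:ℝ)) (Nat.succ_mul_centralBinom_succ n)
    have hn1 : ((n:ℝ)+1) ≠ 0 := by positivity
    have hc : (Nat.centralBinom (n+1) : ℝ) = 2*(2*n+1)/((n:ℝ)+1) * (Nat.centralBinom n : ℝ) := by
      field_simp
      linarith [hkey]
    have h4 : (4:ℝ)^(n+1) = 4 * 4^n := by ring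
    have hb : ((Nat.centralBinom (n+1) : ℝ)/4^(n+1))
        = ((Nat.centralBinom n : ℝ)/4^n) * ((2*n+1)/(2*((n:ℝ)+1))) := by
      rw [hc, h4]
      field_simp
      ring
    rw [hb]
    have hcb : (0:ℝ) ≤ ((Nat.centralBinom n : ℝ)/4^n)^2 := sq_nonneg _
    set a : ℝ := (Nat.centralBinom n : ℝ)/4^n with ha
    have hnn : (0:ℝ) ≤ (n:ℝ) := Nat.cast_nonneg n
    have expand : (a * ((2*n+1)/(2*((n:ℝ)+1))))^2 * (3*(n+1)+1)
        = a^2 * ((2*(n:ℝ)+1)^2 * (3*(n:ℝ)+4)) / (4*((n:ℝ)+1)^2) := by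
      push_cast
      field_simp
      ring
    push_cast
    push_cast at expand
    rw [expand]
    rw [div_le_one (by positivity)]
    have hpoly : (2*(n:ℝ)+1)^2 * (3*(n:ℝ)+4) ≤ (3*(n:ℝ)+1) * (4*((n:ℝ)+1)^2) := by
      nlinarith [hnn]
    calc a^2 * ((2*(n:ℝ)+1)^2 * (3*(n:ℝ)+4))
        ≤ a^2 * ((3*(n:ℝ)+1) * (4*((n:ℝ)+1)^2)) := by
          exact mul_le_mul_of_nonneg_left hpoly hcb
      _ = (a^2 * (3*(n:ℝ)+1)) * (4*((n:ℝ)+1)^2) := by ring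
      _ ≤ 1 * (4*((n:ℝ)+1)^2) := by
          apply mul_le_mul_of_nonneg_right _ (by positivity)
          push_cast at ih
          exact ih
      _ = 4*((n:ℝ)+1)^2 := by ring

lemma cb_le (s : ℕ) : (Nat.centralBinom s : ℝ)/4^s ≤ (Real.sqrt (3*(s:ℝ)+1))⁻¹ := by
  have h1 := cb_sq s
  have ha : (0:ℝ) ≤ (Nat.centralBinom s : ℝ)/4^s := by positivity
  have hb : (0:ℝ) < 3*(s:ℝ)+1 := by positivity
  have h2 : ((Nat.centralBinom s : ℝ)/4^s)^2 ≤ 1/(3*(s:ℝ)+1) := (le_div_iff₀ hb).mpr h1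
  calc (Nat.centralBinom s : ℝ)/4^s
      = Real.sqrt (((Nat.centralBinom s : ℝ)/4^s)^2) := (Real.sqrt_sq ha).symm
    _ ≤ Real.sqrt (1/(3*(s:ℝ)+1)) := Real.sqrt_le_sqrt h2
    _ = (Real.sqrt (3*(s:ℝ)+1))⁻¹ := by rw [one_div, Real.sqrt_inv]


open intervalIntegral

def mQ (m : ℕ) (t : ℝ) : ℝ :=
  ∑ j ∈ Finset.range (m+1), ((-1:ℝ)^j * (m.choose j) / (2*j+1)) * t^(2*j+1)

def SmInt (m : ℕ) (t : ℝ) : ℝ := ∫ u in (0:ℝ)..t, (1 - u^2)^m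

lemma binom_sum (m : ℕ) (t : ℝ) :
    (1 - t^2)^m = ∑ j ∈ Finset.range (m+1), (-1:ℝ)^j * (m.choose j) * t^(2*j) := by
  rw [show (1:ℝ) - t^2 = -t^2 + 1 by ring, add_pow]
  refine Finset.sum_congr rfl fun j hj => ?_
  rw [one_pow, mul_one, neg_pow, ← pow_mul]
  ring_nf

lemma contInt (m : ℕ) : Continuous fun u : ℝ => (1-u^2)^m := by continuity

lemma cont_mQ (m : ℕ) : Continuous (mQ m) := by
  unfold mQ
  exact continuous_finset_sum _ (fun j _ => continuous_const.mul (continuous_pow _))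

lemma SmInt_eq_mQ (m : ℕ) (t : ℝ) : SmInt m t = mQ m t := by
  unfold SmInt
  rw [intervalIntegral.integral_congr
    (g := fun u => ∑ j ∈ Finset.range (m+1), (-1:ℝ)^j * (m.choose j) * u^(2*j))
    (fun u _ => binom_sum m u)]
  rw [intervalIntegral.integral_finset_sum
    (fun j _ => (show Continuous fun u : ℝ => (-1:ℝ)^j * (m.choose j) * u^(2*j) from
      continuous_const.mul (continuous_pow _)).intervalIntegrable _ _)]
  unfold mQ
  refine Finset.sum_congr rfl fun j hj => ?_
  rw [intervalIntegral.integral_const_mul, integral_pow]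
  have h0 : (0:ℝ)^(2*j+1) = 0 := by
    exact zero_pow (by omega)
  rw [h0]
  have h1 : ((2*j:ℕ) : ℝ) + 1 ≠ 0 := by positivity
  field_simp
  push_cast
  ring

lemma hasDerivAt_mQ (m : ℕ) (t : ℝ) : HasDerivAt (mQ m) ((1 - t^2)^m) t := by
  have h : ∀ j ∈ Finset.range (m+1),
      HasDerivAt (fun y : ℝ => ((-1:ℝ)^j * (m.choose j) / (2*j+1)) * y^(2*j+1))
        ((-1:ℝ)^j * (m.choose j) * t^(2*j)) t := by
    intro j _
    have hd := (hasDerivAt_pow (2*j+1) t).const_mul ((-1:ℝ)^j * (m.choose j) / (2*j+1))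
    refine hd.congr_deriv ?_
    have h1 : (2*(j:ℝ)+1) ≠ 0 := by positivity
    have h2 : (2*j+1-1 : ℕ) = 2*j := by omega
    rw [h2]
    push_cast
    field_simp
  have hsum := HasDerivAt.fun_sum h
  rw [← binom_sum] at hsum
  exact hsum

lemma SmInt_sub (m : ℕ) (a b : ℝ) :
    SmInt m b - SmInt m a = ∫ u in a..b, (1-u^2)^m := by
  unfold SmInt
  rw [← intervalIntegral.integral_add_adjacent_intervals
    ((contInt m).intervalIntegrable 0 a) ((contInt m).intervalIntegrable a b)]
  ring

lemma SmInt_mono (m : ℕ) {a b : ℝ} (h1 : -1 ≤ a) (h2 : a ≤ b) (h3 : b ≤ 1) :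
    SmInt m a ≤ SmInt m b := by
  have h : 0 ≤ SmInt m b - SmInt m a := by
    rw [SmInt_sub]
    apply intervalIntegral.integral_nonneg h2
    intro u hu
    have hq : (0:ℝ) ≤ 1 - u^2 := by nlinarith [hu.1, hu.2]
    positivity
  linarith

lemma SmInt_half_lb {m : ℕ} (hm : 1 ≤ m) : 3/8 * (Real.sqrt m)⁻¹ ≤ SmInt m (1/2) := by
  have hm' : (1:ℝ) ≤ m := by exact_mod_cast hm
  have hs1 : 1 ≤ Real.sqrt m := by
    rw [show (1:ℝ) = Real.sqrt 1 by simp]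
    exact Real.sqrt_le_sqrt hm'
  have hs0 : (0:ℝ) < Real.sqrt m := lt_of_lt_of_le one_pos hs1
  set a₀ : ℝ := (2 * Real.sqrt m)⁻¹ with ha₀
  have ha0pos : 0 < a₀ := by positivity
  have hs2 : Real.sqrt m * Real.sqrt m = m := Real.mul_self_sqrt (Nat.cast_nonneg m)
  have ha₀half : a₀ ≤ 1/2 := by
    rw [ha₀]
    rw [inv_le_comm₀ (by positivity) (by norm_num)]
    nlinarith
  have ha₀sq : (m:ℝ) * a₀^2 = 1/4 := by
    rw [ha₀]
    field_simp
    nlinarith [hs2]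
  have step1 : ∫ u in (0:ℝ)..a₀, (1 - (m:ℝ)*u^2)
      ≤ ∫ u in (0:ℝ)..a₀, (1-u^2)^m := by
    apply intervalIntegral.integral_mono_on ha0pos.le
      (by apply Continuous.intervalIntegrable; continuity)
      ((contInt m).intervalIntegrable _ _)
    intro u hu
    have hu1 : 0 ≤ u := hu.1
    have hu2 : u ≤ a₀ := hu.2
    have hb : -2 ≤ -u^2 := by nlinarith [ha₀half]
    have := one_add_mul_le_pow hb m
    calc 1 - (m:ℝ)*u^2 = 1 + (m:ℝ)*(-u^2) := by ring
      _ ≤ (1 + -u^2)^m := this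
      _ = (1-u^2)^m := by ring_nf
  have step2 : ∫ u in (0:ℝ)..a₀, (1 - (m:ℝ)*u^2) = a₀ - (m:ℝ) * a₀^3/3 := by
    rw [intervalIntegral.integral_sub intervalIntegrable_const
      (by apply Continuous.intervalIntegrable; continuity)]
    rw [intervalIntegral.integral_const, intervalIntegral.integral_const_mul, integral_pow]
    norm_num
    ring
  have step3 : SmInt m a₀ ≤ SmInt m (1/2) :=
    SmInt_mono m (by linarith) ha₀half (by norm_num)
  have step4 : a₀ - (m:ℝ)*a₀^3/3 ≤ SmInt m a₀ := by
    unfold SmInt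
    linarith [step1, step2]
  have hval : 3/8 * (Real.sqrt m)⁻¹ ≤ a₀ - (m:ℝ)*a₀^3/3 := by
    have h1 : a₀ - (m:ℝ)*a₀^3/3 = a₀ * (1 - ((m:ℝ)*a₀^2)/3) := by ring
    rw [h1, ha₀sq]
    have h2 : a₀ = (1/2) * (Real.sqrt m)⁻¹ := by
      rw [ha₀, mul_inv]
      norm_num
    rw [h2]
    have h3 : (0:ℝ) ≤ (Real.sqrt m)⁻¹ := by positivity
    nlinarith
  linarith

lemma SmInt_tail (m : ℕ) : SmInt m 1 - SmInt m (1/2) ≤ (3/4)^m * (1/2) := by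
  rw [SmInt_sub m (1/2) 1]
  have h : ∫ u in (1/2:ℝ)..1, (1-u^2)^m ≤ ∫ u in (1/2:ℝ)..1, (3/4:ℝ)^m := by
    apply intervalIntegral.integral_mono_on (by norm_num)
      ((contInt m).intervalIntegrable _ _) intervalIntegrable_const
    intro u hu
    apply pow_le_pow_left₀ (by nlinarith [hu.1, hu.2]) (by nlinarith [hu.1, hu.2])
  rw [intervalIntegral.integral_const] at h
  rw [show ((1:ℝ) - 1/2) • (3/4:ℝ)^m = (3/4)^m * (1/2) by rw [smul_eq_mul]; ring] at h
  exact h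

lemma SmInt_one_pos {m : ℕ} (hm : 1 ≤ m) : 0 < SmInt m 1 := by
  have h0 : (0:ℝ) < Real.sqrt m := Real.sqrt_pos.mpr (by exact_mod_cast hm)
  have h1 : (0:ℝ) < 3/8 * (Real.sqrt m)⁻¹ := by positivity
  have h2 := SmInt_half_lb hm
  have h3 : SmInt m (1/2) ≤ SmInt m 1 := SmInt_mono m (by norm_num) (by norm_num) le_rfl
  linarith

lemma m916 (m : ℕ) (hm : 3 ≤ m) : (m:ℝ) * (9/16)^m ≤ 9/16 := by
  induction m, hm using Nat.le_induction with
  | base => norm_num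
  | succ n hn ih =>
    have hX : (0:ℝ) ≤ (9/16:ℝ)^n := by positivity
    have h3 : (3:ℝ) ≤ (n:ℝ) := by exact_mod_cast hn
    have hX2 : (3:ℝ)*(9/16:ℝ)^n ≤ (n:ℝ)*(9/16:ℝ)^n := by nlinarith
    push_cast
    rw [pow_succ]
    nlinarith

lemma sqrt34 {m : ℕ} (hm : 3 ≤ m) : Real.sqrt m * (3/4)^m ≤ 3/4 := by
  have h1 : (Real.sqrt m * (3/4:ℝ)^m)^2 = (m:ℝ) * (9/16)^m := by
    rw [mul_pow, Real.sq_sqrt (Nat.cast_nonneg m)]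
    congr 1
    rw [← pow_mul, mul_comm m 2, pow_mul]
    norm_num
  have h2 := m916 m hm
  have h3 : (0:ℝ) ≤ Real.sqrt m * (3/4:ℝ)^m := by positivity
  nlinarith [h1, h2, h3]

def smf (m : ℕ) (t : ℝ) : ℝ := (SmInt m 1)⁻¹ * mQ m t

lemma mQ_odd (m : ℕ) (t : ℝ) : mQ m (-t) = - mQ m t := by
  unfold mQ
  rw [← Finset.sum_neg_distrib]
  refine Finset.sum_congr rfl fun j _ => ?_
  rw [Odd.neg_pow (odd_two_mul_add_one j)]
  ring

lemma smf_odd (m : ℕ) (t : ℝ) : smf m (-t) = - smf m t := by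
  unfold smf
  rw [mQ_odd]
  ring

lemma SmInt_zero (m : ℕ) : SmInt m 0 = 0 := intervalIntegral.integral_same

lemma abs_SmInt_le {m : ℕ} {y : ℝ} (hy : |y| ≤ 1) : |SmInt m y| ≤ SmInt m 1 := by
  rcases abs_le.mp hy with ⟨h1, h2⟩
  rcases le_total 0 y with h | h
  · rw [abs_of_nonneg (by
      have := SmInt_mono m (by norm_num) h (by linarith)
      rw [SmInt_zero] at this
      linarith)]
    exact SmInt_mono m (by linarith) h2 le_rfl
  · have hodd : SmInt m y = - SmInt m (-y) := by
      rw [SmInt_eq_mQ, SmInt_eq_mQ, ← mQ_odd]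
      ring_nf
    rw [hodd, abs_neg]
    rw [abs_of_nonneg (by
      have := SmInt_mono m (by norm_num) (by linarith : (0:ℝ) ≤ -y) (by linarith)
      rw [SmInt_zero] at this
      linarith)]
    exact SmInt_mono m (by linarith) (by linarith) le_rfl

lemma SmInt_lip {m : ℕ} {a b : ℝ} (ha : |a| ≤ 1) (hb : |b| ≤ 1) :
    |SmInt m b - SmInt m a| ≤ |b - a| := by
  rw [SmInt_sub]
  have hbd : ∀ u ∈ Set.uIoc a b, ‖(1-u^2)^m‖ ≤ 1 := by
    intro u hu
    have h1 : min a b ≤ u := le_of_lt hu.1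
    have h2 : u ≤ max a b := hu.2
    have ha' := abs_le.mp ha
    have hb' := abs_le.mp hb
    have hu1 : -1 ≤ u := le_trans (le_min ha'.1 hb'.1) h1
    have hu2 : u ≤ 1 := le_trans h2 (max_le ha'.2 hb'.2)
    rw [Real.norm_eq_abs, abs_pow]
    apply pow_le_one₀ (abs_nonneg _)
    rw [abs_le]
    constructor <;> nlinarith
  have := intervalIntegral.norm_integral_le_of_norm_le_const hbd
  rw [Real.norm_eq_abs] at this
  simpa using this

lemma smf_abs_le {m : ℕ} (hm : 1 ≤ m) {y : ℝ} (hy : |y| ≤ 1) : |smf m y| ≤ 1 := by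
  unfold smf
  rw [abs_mul, abs_inv, abs_of_pos (SmInt_one_pos hm), ← SmInt_eq_mQ]
  rw [inv_mul_le_iff₀ (SmInt_one_pos hm)]
  simpa using abs_SmInt_le hy

lemma smf_ge_half {m : ℕ} (hm : 3 ≤ m) {y : ℝ} (h1 : 1/2 ≤ y) (h2 : y ≤ 1) :
    1/2 ≤ smf m y := by
  have hm1 : 1 ≤ m := by omega
  have hpos := SmInt_one_pos hm1
  have hs0 : (0:ℝ) < Real.sqrt m := Real.sqrt_pos.mpr (by exact_mod_cast hm1)
  have hkey : SmInt m 1 ≤ 2 * SmInt m (1/2) := by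
    have t1 := SmInt_tail m
    have t2 := SmInt_half_lb hm1
    have t3 : (3/4:ℝ)^m * (1/2) ≤ 3/8 * (Real.sqrt m)⁻¹ := by
      have h34 := sqrt34 hm
      have hinv : (0:ℝ) < (Real.sqrt m)⁻¹ := by positivity
      have hx : (3/4:ℝ)^m ≤ 3/4 * (Real.sqrt m)⁻¹ := by
        rw [← div_eq_mul_inv, le_div_iff₀ hs0, mul_comm]
        exact h34
      linarith
    linarith
  have hmono : SmInt m (1/2) ≤ SmInt m y := SmInt_mono m (by norm_num) h1 h2
  unfold smf
  rw [← SmInt_eq_mQ]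
  rw [show (1:ℝ)/2 = (SmInt m 1)⁻¹ * (SmInt m 1 * (1/2)) by field_simp]
  apply mul_le_mul_of_nonneg_left _ (by
    have := SmInt_one_pos hm1
    positivity)
  linarith

lemma smf_lip {m : ℕ} (hm : 1 ≤ m) {a b : ℝ} (ha : |a| ≤ 1) (hb : |b| ≤ 1) :
    |smf m a - smf m b| ≤ (SmInt m 1)⁻¹ * |a - b| := by
  unfold smf
  rw [← SmInt_eq_mQ, ← SmInt_eq_mQ, ← mul_sub, abs_mul, abs_inv,
    abs_of_pos (SmInt_one_pos hm)]
  apply mul_le_mul_of_nonneg_left _ (by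
    have := SmInt_one_pos hm
    positivity)
  simpa [abs_sub_comm] using SmInt_lip hb ha



lemma isTrigPoly_zero (n : ℕ) : IsTrigPoly n (fun _ => 0) :=
  ⟨fun _ => 0, by simp⟩

lemma isTrigPoly_monomial {n : ℕ} {μ : ℤ} (hμ : |μ| ≤ (n:ℤ)) (a : ℂ) :
    IsTrigPoly n (fun x : ℝ => a * Complex.exp (Complex.I * μ * x)) := by
  classical
  refine ⟨fun ν => if ν = μ then a else 0, fun x => ?_⟩
  rw [show ∑ ν ∈ Finset.Icc (-(n:ℤ)) (n:ℤ),
        (if ν = μ then a else 0) * Complex.exp (Complex.I * ν * x)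
      = ∑ ν ∈ Finset.Icc (-(n:ℤ)) (n:ℤ),
        (if ν = μ then a * Complex.exp (Complex.I * ν * x) else 0) from
    Finset.sum_congr rfl (fun ν _ => by split <;> simp)]
  rw [Finset.sum_ite_eq' (Finset.Icc (-(n:ℤ)) (n:ℤ)) μ
      (fun ν => a * Complex.exp (Complex.I * ν * x))]
  rw [if_pos]
  rw [Finset.mem_Icc]
  rcases abs_le.mp hμ with ⟨h1, h2⟩
  exact ⟨h1, h2⟩

lemma isTrigPoly_sum {ι : Type} (n : ℕ) (s : Finset ι) (F : ι → ℝ → ℂ)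
    (h : ∀ i ∈ s, IsTrigPoly n (F i)) :
    IsTrigPoly n (fun x => ∑ i ∈ s, F i x) := by
  classical
  choose c hc using h
  refine ⟨fun ν => ∑ i ∈ s.attach, c i.1 i.2 ν, fun x => ?_⟩
  show ∑ i ∈ s, F i x = _
  rw [← Finset.sum_attach s (fun i => F i x)]
  simp only []
  rw [Finset.sum_congr rfl (fun i _ => hc i.1 i.2 x)]
  rw [Finset.sum_comm]
  refine Finset.sum_congr rfl fun ν _ => ?_
  rw [Finset.sum_mul]

lemma sin_pow_expand (K : ℕ) (θ : ℝ) :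
    ((Real.sin θ : ℝ) : ℂ) ^ K
      = ∑ l ∈ Finset.range (K+1),
          (Complex.I ^ K / 2 ^ K * ((K.choose l : ℂ)) * (-1) ^ (K - l))
            * Complex.exp (Complex.I * (((K:ℤ) - 2*l) : ℤ) * θ) := by
  rw [Complex.ofReal_sin]
  rw [show Complex.sin (θ:ℂ)
      = (Complex.exp (-(θ:ℂ) * Complex.I) - Complex.exp ((θ:ℂ) * Complex.I)) * Complex.I / 2
      from rfl]
  rw [div_pow, mul_pow, sub_eq_add_neg, add_pow]
  rw [Finset.sum_mul, Finset.sum_div]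
  refine Finset.sum_congr rfl fun l hl => ?_
  have hlK : l ≤ K := Nat.lt_succ_iff.mp (Finset.mem_range.mp hl)
  rw [neg_pow (Complex.exp ((θ:ℂ) * Complex.I))]
  rw [← Complex.exp_nat_mul, ← Complex.exp_nat_mul]
  rw [show Complex.exp ((l:ℂ) * (-(θ:ℂ) * Complex.I)) * ((-1:ℂ) ^ (K-l)
        * Complex.exp (((K-l : ℕ):ℂ) * ((θ:ℂ) * Complex.I)))
      = (-1:ℂ)^(K-l) * (Complex.exp ((l:ℂ) * (-(θ:ℂ) * Complex.I))
        * Complex.exp (((K-l : ℕ):ℂ) * ((θ:ℂ) * Complex.I))) by ring]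
  rw [← Complex.exp_add]
  rw [show ((l:ℂ) * (-(θ:ℂ) * Complex.I) + ((K-l : ℕ):ℂ) * ((θ:ℂ) * Complex.I))
      = Complex.I * ((((K:ℤ) - 2*l) : ℤ):ℂ) * (θ:ℂ) by
    push_cast [Nat.cast_sub hlK]
    ring]
  ring


def Tgood (m : ℕ) : ℝ → ℂ :=
  fun x => ((-(m:ℝ)⁻¹ * smf m (Real.sin ((m:ℝ)*x)) : ℝ) : ℂ)

lemma cont_Tgood (m : ℕ) : Continuous (Tgood m) := by
  unfold Tgood smf
  apply Complex.continuous_ofReal.comp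
  apply Continuous.mul continuous_const
  apply Continuous.mul continuous_const
  exact (cont_mQ m).comp (Real.continuous_sin.comp (continuous_const.mul continuous_id))

lemma Tgood_abs_le {m : ℕ} (hm : 1 ≤ m) (x : ℝ) :
    ‖Tgood m x‖ ≤ (m:ℝ)⁻¹ := by
  unfold Tgood
  rw [Complex.norm_real, Real.norm_eq_abs, abs_mul, abs_neg, abs_inv, Nat.abs_cast]
  apply mul_le_of_le_one_right (by positivity)
  exact smf_abs_le hm (abs_le.mpr ⟨Real.neg_one_le_sin _, Real.sin_le_one _⟩)

lemma Tgood_anti {m : ℕ} (hm : 1 ≤ m) (x : ℝ) :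
    Tgood m (x + π/m) = - Tgood m x := by
  have hms : (m:ℝ) ≠ 0 := by positivity
  unfold Tgood
  rw [show (m:ℝ)*(x + π/m) = (m:ℝ)*x + π by field_simp]
  rw [Real.sin_add_pi]
  rw [smf_odd]
  push_cast
  ring

lemma Tgood_lip {m : ℕ} (hm : 1 ≤ m) (x h : ℝ) :
    ‖Tgood m x - Tgood m (x+h)‖ ≤ (SmInt m 1)⁻¹ * |h| := by
  have hms : (0:ℝ) < (m:ℝ) := by positivity
  unfold Tgood
  rw [← Complex.ofReal_sub, Complex.norm_real, Real.norm_eq_abs]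
  rw [show (-(m:ℝ)⁻¹ * smf m (Real.sin ((m:ℝ)*x)) - -(m:ℝ)⁻¹ * smf m (Real.sin ((m:ℝ)*(x+h))))
      = -(m:ℝ)⁻¹ * (smf m (Real.sin ((m:ℝ)*x)) - smf m (Real.sin ((m:ℝ)*(x+h)))) by ring]
  rw [abs_mul, abs_neg, abs_inv, Nat.abs_cast]
  have hsin : |Real.sin ((m:ℝ)*x) - Real.sin ((m:ℝ)*(x+h))| ≤ (m:ℝ) * |h| := by
    rw [Real.sin_sub_sin]
    rw [abs_mul, abs_mul]
    have e1 : |(2:ℝ)| = 2 := by norm_num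
    rw [e1]
    have e2 : |Real.sin (((m:ℝ)*x - (m:ℝ)*(x+h))/2)| ≤ |((m:ℝ)*x - (m:ℝ)*(x+h))/2| :=
      Real.abs_sin_le_abs
    have e3 : |Real.cos (((m:ℝ)*x + (m:ℝ)*(x+h))/2)| ≤ 1 := Real.abs_cos_le_one _
    have e4 : |((m:ℝ)*x - (m:ℝ)*(x+h))/2| = (m:ℝ)*|h|/2 := by
      rw [show ((m:ℝ)*x - (m:ℝ)*(x+h))/2 = -((m:ℝ)*h)/2 by ring]
      rw [abs_div, abs_neg, abs_mul, Nat.abs_cast]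
      norm_num
    have e5 : (0:ℝ) ≤ |Real.sin (((m:ℝ)*x - (m:ℝ)*(x+h))/2)| := abs_nonneg _
    nlinarith [e2, e3, e4, e5, abs_nonneg (Real.cos (((m:ℝ)*x + (m:ℝ)*(x+h))/2))]
  have hlip := smf_lip hm (a := Real.sin ((m:ℝ)*x)) (b := Real.sin ((m:ℝ)*(x+h)))
    (abs_le.mpr ⟨Real.neg_one_le_sin _, Real.sin_le_one _⟩)
    (abs_le.mpr ⟨Real.neg_one_le_sin _, Real.sin_le_one _⟩)
  have hS := SmInt_one_pos hm
  calc ((m:ℝ))⁻¹ * |smf m (Real.sin ((m:ℝ)*x)) - smf m (Real.sin ((m:ℝ)*(x+h)))|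
      ≤ ((m:ℝ))⁻¹ * ((SmInt m 1)⁻¹ * |Real.sin ((m:ℝ)*x) - Real.sin ((m:ℝ)*(x+h))|) := by
        apply mul_le_mul_of_nonneg_left (hlip) (by positivity)
    _ ≤ ((m:ℝ))⁻¹ * ((SmInt m 1)⁻¹ * ((m:ℝ)*|h|)) := by
        apply mul_le_mul_of_nonneg_left _ (by positivity)
        apply mul_le_mul_of_nonneg_left hsin (by positivity)
    _ = (SmInt m 1)⁻¹ * |h| := by field_simp

lemma Tgood_hasDeriv {m : ℕ} (hm : 1 ≤ m) (x : ℝ) :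
    HasDerivAt (Tgood m)
      (((-(SmInt m 1)⁻¹ * (Real.cos ((m:ℝ)*x))^(2*m+1) : ℝ) : ℂ)) x := by
  have hms : (m:ℝ) ≠ 0 := by positivity
  have h1 : HasDerivAt (fun y : ℝ => (m:ℝ)*y) ((m:ℝ)) x := by
    simpa using (hasDerivAt_id x).const_mul (m:ℝ)
  have h2 : HasDerivAt (fun y : ℝ => Real.sin ((m:ℝ)*y)) (Real.cos ((m:ℝ)*x) * (m:ℝ)) x :=
    (Real.hasDerivAt_sin ((m:ℝ)*x)).comp x h1
  have h3 : HasDerivAt (fun y : ℝ => mQ m (Real.sin ((m:ℝ)*y)))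
      ((1 - (Real.sin ((m:ℝ)*x))^2)^m * (Real.cos ((m:ℝ)*x) * (m:ℝ))) x :=
    (hasDerivAt_mQ m _).comp x h2
  have h4 := (h3.const_mul ((SmInt m 1)⁻¹)).const_mul (-(m:ℝ)⁻¹)
  have h5 := h4.ofReal_comp
  have hfun : (fun y : ℝ => ((-(m:ℝ)⁻¹ * ((SmInt m 1)⁻¹ * mQ m (Real.sin ((m:ℝ)*y))) : ℝ) : ℂ))
      = Tgood m := by
    funext y
    unfold Tgood smf
    norm_cast
  rw [hfun] at h5
  have hval : (-(m:ℝ)⁻¹ * ((SmInt m 1)⁻¹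
        * ((1 - (Real.sin ((m:ℝ)*x))^2)^m * (Real.cos ((m:ℝ)*x) * (m:ℝ))))
      : ℝ) = -(SmInt m 1)⁻¹ * (Real.cos ((m:ℝ)*x))^(2*m+1) := by
    have hc : (m:ℝ)⁻¹ * (m:ℝ) = 1 := inv_mul_cancel₀ hms
    rw [← Real.cos_sq', ← pow_mul]
    calc -(m:ℝ)⁻¹ * ((SmInt m 1)⁻¹
          * ((Real.cos ((m:ℝ)*x))^(2*m) * (Real.cos ((m:ℝ)*x) * (m:ℝ))))
        = ((m:ℝ)⁻¹ * (m:ℝ))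
            * (-(SmInt m 1)⁻¹ * ((Real.cos ((m:ℝ)*x))^(2*m) * Real.cos ((m:ℝ)*x))) := by ring
      _ = -(SmInt m 1)⁻¹ * ((Real.cos ((m:ℝ)*x))^(2*m) * Real.cos ((m:ℝ)*x)) := by
          rw [hc, one_mul]
      _ = -(SmInt m 1)⁻¹ * (Real.cos ((m:ℝ)*x))^(2*m+1) := by rw [pow_succ]
  rw [hval] at h5
  exact h5

def Acoef (m j l : ℕ) : ℂ :=
  ((-(m:ℝ)⁻¹ * (SmInt m 1)⁻¹ * ((-1:ℝ)^j * (m.choose j) / (2*j+1)) : ℝ) : ℂ)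
    * (Complex.I ^ (2*j+1) / 2 ^ (2*j+1) * (((2*j+1).choose l : ℂ)) * (-1 : ℂ) ^ (2*j+1 - l))

lemma Tgood_eq_sum (m : ℕ) (x : ℝ) :
    Tgood m x = ∑ j ∈ Finset.range (m+1), ∑ l ∈ Finset.range (2*j+1+1),
      Acoef m j l * Complex.exp (Complex.I * (((((2*j+1:ℕ):ℤ) - 2*l) * m : ℤ)) * x) := by
  unfold Tgood smf mQ
  rw [show ((-(m:ℝ)⁻¹ * ((SmInt m 1)⁻¹
        * ∑ j ∈ Finset.range (m+1), ((-1:ℝ)^j * (m.choose j) / (2*j+1)) * (Real.sin ((m:ℝ)*x))^(2*j+1)) : ℝ) : ℂ)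
      = ∑ j ∈ Finset.range (m+1),
          ((-(m:ℝ)⁻¹ * (SmInt m 1)⁻¹ * ((-1:ℝ)^j * (m.choose j) / (2*j+1)) : ℝ) : ℂ)
            * ((Real.sin ((m:ℝ)*x) : ℝ) : ℂ)^(2*j+1) by
    push_cast
    rw [Finset.mul_sum, Finset.mul_sum]
    refine Finset.sum_congr rfl fun j _ => ?_
    ring]
  refine Finset.sum_congr rfl fun j _ => ?_
  rw [sin_pow_expand (2*j+1) ((m:ℝ)*x)]
  rw [Finset.mul_sum]
  refine Finset.sum_congr rfl fun l _ => ?_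
  rw [show Complex.I * (((((2*j+1:ℕ):ℤ) - 2*l) : ℤ):ℂ) * (((m:ℝ)*x : ℝ):ℂ)
      = Complex.I * (((((2*j+1:ℕ):ℤ) - 2*l) * m : ℤ):ℂ) * (x:ℂ) by
    push_cast
    ring]
  unfold Acoef
  ring

lemma isTrigPoly_Tgood {m n : ℕ} (hm : 1 ≤ m) (hdeg : (2*m+1)*m ≤ n) :
    IsTrigPoly n (Tgood m) := by
  rw [show Tgood m = fun x : ℝ => ∑ j ∈ Finset.range (m+1), ∑ l ∈ Finset.range (2*j+1+1),
      Acoef m j l * Complex.exp (Complex.I * (((((2*j+1:ℕ):ℤ) - 2*l) * m : ℤ)) * x)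
    from funext (Tgood_eq_sum m)]
  apply isTrigPoly_sum
  intro j hj
  apply isTrigPoly_sum
  intro l hl
  apply isTrigPoly_monomial
  have hj' : j ≤ m := Nat.lt_succ_iff.mp (Finset.mem_range.mp hj)
  have hl' : l ≤ 2*j+1 := Nat.lt_succ_iff.mp (Finset.mem_range.mp hl)
  rw [abs_mul]
  have h1 : |(((2*j+1:ℕ):ℤ)) - 2*(l:ℤ)| ≤ (((2*j+1:ℕ):ℤ)) := by
    rw [abs_le]
    constructor <;> [push_cast; push_cast] <;> omega
  have h2 : |(m:ℤ)| = (m:ℤ) := by simp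
  calc |(((2*j+1:ℕ):ℤ)) - 2*(l:ℤ)| * |(m:ℤ)|
      ≤ (((2*j+1:ℕ):ℤ)) * (m:ℤ) := by
        rw [h2]
        exact mul_le_mul_of_nonneg_right h1 (by positivity)
    _ ≤ (((2*m+1:ℕ):ℤ)) * (m:ℤ) := by
        apply mul_le_mul_of_nonneg_right _ (by positivity)
        push_cast
        omega
    _ ≤ (n:ℤ) := by exact_mod_cast hdeg

def kseq (n : ℕ) : ℕ := Nat.sqrt (n / 3)

def Tpoly (n : ℕ) : ℝ → ℂ :=
  if 3 ≤ kseq n then Tgood (kseq n) else fun _ => 0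

lemma kseq_tendsto : Tendsto kseq atTop atTop := by
  apply tendsto_atTop_atTop.mpr
  intro b
  refine ⟨3*b*b, fun n hn => ?_⟩
  unfold kseq
  rw [Nat.le_sqrt]
  rw [Nat.le_div_iff_mul_le (by norm_num)]
  calc b*b*3 = 3*b*b := by ring
    _ ≤ n := hn

lemma Tpoly_trig (n : ℕ) : IsTrigPoly n (Tpoly n) := by
  unfold Tpoly
  split
  case isTrue h3 =>
    apply isTrigPoly_Tgood (by omega)
    have h1 : kseq n * kseq n ≤ n / 3 := by
      have := Nat.sqrt_le' (n/3)
      rw [pow_two] at this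
      exact this
    have h2 : (n/3) * 3 ≤ n := Nat.div_mul_le_self n 3
    have h3' : 1 ≤ kseq n := by omega
    calc (2*kseq n+1)*kseq n = 2*(kseq n*kseq n) + kseq n := by ring
      _ ≤ 2*(kseq n*kseq n) + kseq n * kseq n :=
          Nat.add_le_add_left (Nat.le_mul_of_pos_left _ h3') _
      _ = 3*(kseq n * kseq n) := by ring
      _ ≤ 3*(n/3) := Nat.mul_le_mul_left 3 h1
      _ ≤ n := by omega
  case isFalse _ => exact isTrigPoly_zero n

lemma SmInt_inv_le {m : ℕ} (hm : 1 ≤ m) : (SmInt m 1)⁻¹ ≤ 8/3 * Real.sqrt m := by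
  have h2 := SmInt_half_lb hm
  have h3 : SmInt m (1/2) ≤ SmInt m 1 := SmInt_mono m (by norm_num) (by norm_num) le_rfl
  have hs0 : (0:ℝ) < Real.sqrt m := Real.sqrt_pos.mpr (by exact_mod_cast hm)
  have hb : (0:ℝ) < 3/8 * (Real.sqrt m)⁻¹ := by positivity
  have hx := inv_anti₀ hb (by linarith : 3/8 * (Real.sqrt m)⁻¹ ≤ SmInt m 1)
  calc (SmInt m 1)⁻¹ ≤ (3/8 * (Real.sqrt m)⁻¹)⁻¹ := hx
    _ = 8/3 * Real.sqrt m := by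
        rw [mul_inv, inv_inv]
        norm_num

lemma delta_one (h : ℝ) (v : ℝ → ℂ) : delta h 1 v = fun x => v x - v (x + h) := by
  funext x
  unfold delta
  rw [Finset.sum_range_succ, Finset.sum_range_one]
  norm_num
  ring

lemma sin_ge_half {t : ℝ} (h1 : π/6 ≤ t) (h2 : t ≤ 5*π/6) : 1/2 ≤ Real.sin t := by
  have hpi := Real.pi_pos
  rcases le_total t (π/2) with h | h
  · rw [← Real.sin_pi_div_six]
    exact Real.sin_le_sin_of_le_of_le_pi_div_two (by linarith) h h1
  · rw [show Real.sin t = Real.sin (π - (π - t)) by ring_nf, Real.sin_pi_sub]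
    rw [← Real.sin_pi_div_six]
    exact Real.sin_le_sin_of_le_of_le_pi_div_two (by linarith) (by linarith) (by linarith)

lemma lp_smf_lower {p : ℝ≥0∞} (hpt : p ≠ ⊤) (hq : 0 < p.toReal) {m : ℕ} (hm : 3 ≤ m) :
    (1/2) * (3:ℝ) ^ (-(p.toReal)⁻¹)
      ≤ LpNorm p (fun x => ((smf m (Real.sin ((m:ℝ)*x)) : ℝ) : ℂ)) := by
  set q := p.toReal with hqd
  have hm1 : 1 ≤ m := by omega
  set W : ℝ → ℝ := fun t => |smf m (Real.sin t)|^q with hW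
  have hsmfc : Continuous (smf m) := by
    unfold smf
    exact continuous_const.mul (cont_mQ m)
  have hWcont : Continuous W := by
    rw [hW]
    exact (continuous_abs.comp (hsmfc.comp Real.continuous_sin)).rpow_const
      (fun _ => Or.inr hq.le)
  have hWnn : ∀ t, 0 ≤ W t := by
    intro t
    rw [hW]
    exact Real.rpow_nonneg (abs_nonneg _) _
  have hWper : Function.Periodic W (2*π) := by
    intro t
    rw [hW]
    simp only []
    rw [Real.sin_periodic t]
  have hsub : ∫ x in (0:ℝ)..(2*π),
        ‖((smf m (Real.sin ((m:ℝ)*x)) : ℝ) : ℂ)‖ ^ q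
      = ∫ t in (0:ℝ)..(2*π), W t := by
    rw [intervalIntegral.integral_congr (g := fun x => W ((m:ℝ)*x))
      (fun x _ => by rw [hW]; simp [Complex.norm_real])]
    exact integral_comp_nat_mul hWcont hWper (by omega)
  have hmid : ∀ t ∈ Set.Icc (π/6) (5*π/6), ((1:ℝ)/2)^q ≤ W t := by
    intro t ht
    have hs := sin_ge_half ht.1 ht.2
    have hsmf := smf_ge_half hm hs (Real.sin_le_one t)
    rw [hW]
    exact Real.rpow_le_rpow (by norm_num) (le_trans hsmf (le_abs_self _)) hq.le
  have hpi := Real.pi_pos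
  have i1 : (∫ t in (0:ℝ)..(π/6), W t) + (∫ t in (π/6:ℝ)..(5*π/6), W t)
      = ∫ t in (0:ℝ)..(5*π/6), W t :=
    intervalIntegral.integral_add_adjacent_intervals
      (hWcont.intervalIntegrable _ _) (hWcont.intervalIntegrable _ _)
  have i2 : (∫ t in (0:ℝ)..(5*π/6), W t) + (∫ t in (5*π/6:ℝ)..(2*π), W t)
      = ∫ t in (0:ℝ)..(2*π), W t :=
    intervalIntegral.integral_add_adjacent_intervals
      (hWcont.intervalIntegrable _ _) (hWcont.intervalIntegrable _ _)
  have n1 : 0 ≤ ∫ t in (0:ℝ)..(π/6), W t :=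
    intervalIntegral.integral_nonneg (by linarith) (fun t _ => hWnn t)
  have n3 : 0 ≤ ∫ t in (5*π/6:ℝ)..(2*π), W t :=
    intervalIntegral.integral_nonneg (by linarith) (fun t _ => hWnn t)
  have nmid : (5*π/6 - π/6) * ((1:ℝ)/2)^q ≤ ∫ t in (π/6:ℝ)..(5*π/6), W t := by
    have hmono := intervalIntegral.integral_mono_on (by linarith)
      (intervalIntegrable_const :
        IntervalIntegrable (fun _ : ℝ => ((1:ℝ)/2)^q) volume (π/6) (5*π/6))
      (hWcont.intervalIntegrable _ _) hmid
    rw [intervalIntegral.integral_const, smul_eq_mul] at hmono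
    exact hmono
  have hsplit : (2*π/3) * ((1:ℝ)/2)^q ≤ ∫ t in (0:ℝ)..(2*π), W t := by
    have e : (5*π/6 - π/6) * ((1:ℝ)/2)^q = (2*π/3) * ((1:ℝ)/2)^q := by ring
    linarith [nmid, i1, i2, n1, n3]
  rw [lpnorm_eq hpt]
  have hbase : ((1:ℝ)/3) * ((1:ℝ)/2)^q
      ≤ (2*π)⁻¹ * ∫ x in (0:ℝ)..(2*π),
          ‖((smf m (Real.sin ((m:ℝ)*x)) : ℝ) : ℂ)‖ ^ q := by
    rw [hsub]
    have e1 : ((1:ℝ)/3) * ((1:ℝ)/2)^q = (2*π)⁻¹ * ((2*π/3) * ((1:ℝ)/2)^q) := by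
      rw [show (2*π)⁻¹ * ((2*π/3) * ((1:ℝ)/2)^q) = ((2*π)⁻¹ * (2*π)) * (((1:ℝ)/3) * ((1:ℝ)/2)^q) by ring,
        inv_mul_cancel₀ twopi_pos.ne', one_mul]
    rw [e1]
    exact mul_le_mul_of_nonneg_left hsplit (by positivity)
  have e1 : (((1:ℝ)/2)^q)^(q⁻¹) = 1/2 := by
    rw [← Real.rpow_mul (by norm_num : (0:ℝ) ≤ 1/2), mul_inv_cancel₀ hq.ne', Real.rpow_one]
  have e2 : (((1:ℝ)/3))^(q⁻¹) = (3:ℝ)^(-q⁻¹) := by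
    rw [show ((1:ℝ)/3) = 3⁻¹ by norm_num, Real.inv_rpow (by norm_num), ← Real.rpow_neg (by norm_num)]
  calc (1/2) * (3:ℝ)^(-q⁻¹) = (((1:ℝ)/3) * ((1:ℝ)/2)^q)^(q⁻¹) := by
        rw [Real.mul_rpow (by norm_num) (by positivity), e1, e2]
        ring
    _ ≤ ((2*π)⁻¹ * ∫ x in (0:ℝ)..(2*π),
          ‖((smf m (Real.sin ((m:ℝ)*x)) : ℝ) : ℂ)‖ ^ q)^(q⁻¹) :=
        Real.rpow_le_rpow (by positivity) hbase (by positivity)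

lemma lp_deriv_bound {p : ℝ≥0∞} (hpt : p ≠ ⊤) (hq : 0 < p.toReal) {m : ℕ} (hm : 3 ≤ m) :
    LpNorm p (fun x => (0:ℂ) - ((-(SmInt m 1)⁻¹ * (Real.cos ((m:ℝ)*x))^(2*m+1) : ℝ) : ℂ))
      ≤ (8/3) * Real.sqrt m
        * ((Real.sqrt (3*((⌊(m:ℝ)*p.toReal⌋₊ : ℕ):ℝ)+1))⁻¹) ^ (p.toReal)⁻¹ := by
  have hm1 : 1 ≤ m := by omega
  have hS := SmInt_one_pos hm1
  have hmN : m ≠ 0 := by omega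
  set q := p.toReal with hqd
  set s := ⌊(m:ℝ)*q⌋₊ with hsd
  have hc'pos : (0:ℝ) < (SmInt m 1)⁻¹ := by positivity
  have hcont : Continuous
      (fun x : ℝ => (0:ℂ) - ((-(SmInt m 1)⁻¹ * (Real.cos ((m:ℝ)*x))^(2*m+1) : ℝ) : ℂ)) := by
    apply Continuous.sub continuous_const
    apply Complex.continuous_ofReal.comp
    exact continuous_const.mul ((Real.continuous_cos.comp (continuous_const.mul continuous_id)).pow _)
  have hpt2 : ∀ x ∈ Set.Icc (0:ℝ) (2*π),
      ‖(0:ℂ) - ((-(SmInt m 1)⁻¹ * (Real.cos ((m:ℝ)*x))^(2*m+1) : ℝ) : ℂ)‖ ^ q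
        ≤ ((SmInt m 1)⁻¹)^q * (Real.cos ((m:ℝ)*x))^(2*s) := by
    intro x _
    have habs : ‖(0:ℂ) - ((-(SmInt m 1)⁻¹ * (Real.cos ((m:ℝ)*x))^(2*m+1) : ℝ) : ℂ)‖
        = (SmInt m 1)⁻¹ * |Real.cos ((m:ℝ)*x)|^(2*m+1) := by
      rw [zero_sub, ← Complex.ofReal_neg, Complex.norm_real, Real.norm_eq_abs]
      rw [show -(-(SmInt m 1)⁻¹ * (Real.cos ((m:ℝ)*x))^(2*m+1))
          = (SmInt m 1)⁻¹ * (Real.cos ((m:ℝ)*x))^(2*m+1) by ring]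
      rw [abs_mul, abs_inv, abs_of_pos hS, abs_pow]
    rw [habs, Real.mul_rpow hc'pos.le (by positivity)]
    apply mul_le_mul_of_nonneg_left _ (Real.rpow_nonneg hc'pos.le _)
    set c := Real.cos ((m:ℝ)*x) with hcdef
    have hc1 : |c| ≤ 1 := Real.abs_cos_le_one _
    have h2s : ((2*s : ℕ):ℝ) ≤ ((2*m+1 : ℕ):ℝ) * q := by
      have hfl : ((s:ℕ):ℝ) ≤ (m:ℝ)*q := Nat.floor_le (by positivity)
      push_cast
      push_cast at hfl
      nlinarith [hq.le]
    have hcevens : (0:ℝ) ≤ c^(2*s) := Even.pow_nonneg ⟨s, by ring⟩ c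
    rcases eq_or_lt_of_le (abs_nonneg c) with h0 | h0
    · have hc0 : c = 0 := abs_eq_zero.mp h0.symm
      rw [hc0, abs_zero, zero_pow (by omega : 2*m+1 ≠ 0), Real.zero_rpow hq.ne']
      rw [hc0] at hcevens
      exact hcevens
    · have hcpow : c^(2*s) = |c|^(2*s) := by
        rw [← abs_pow, abs_of_nonneg hcevens]
      rw [hcpow, ← Real.rpow_natCast |c| (2*m+1), ← Real.rpow_natCast |c| (2*s),
        ← Real.rpow_mul (abs_nonneg c)]
      exact Real.rpow_le_rpow_of_exponent_ge h0 hc1 h2s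
  rw [lpnorm_eq hpt]
  have hint1 : ∫ x in (0:ℝ)..(2*π),
        ‖(0:ℂ) - ((-(SmInt m 1)⁻¹ * (Real.cos ((m:ℝ)*x))^(2*m+1) : ℝ) : ℂ)‖ ^ q
      ≤ ((SmInt m 1)⁻¹)^q * (2*π*((Nat.centralBinom s : ℝ)/4^s)) := by
    have hmono := intervalIntegral.integral_mono_on (μ := volume) twopi_pos.le
      ((cont_abs_rpow hq hcont).intervalIntegrable _ _)
      ((continuous_const.mul ((Real.continuous_cos.comp
        (continuous_const.mul continuous_id)).pow (2*s))).intervalIntegrable _ _)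
      hpt2
    simp only [Pi.mul_apply, Pi.pow_apply, Function.comp_apply, id_eq] at hmono
    rw [intervalIntegral.integral_const_mul] at hmono
    rw [cos_pow_int m s hmN] at hmono
    exact hmono
  have hbase : (2*π)⁻¹ * ∫ x in (0:ℝ)..(2*π),
        ‖(0:ℂ) - ((-(SmInt m 1)⁻¹ * (Real.cos ((m:ℝ)*x))^(2*m+1) : ℝ) : ℂ)‖ ^ q
      ≤ ((SmInt m 1)⁻¹)^q * ((Nat.centralBinom s : ℝ)/4^s) := by
    have h1 := mul_le_mul_of_nonneg_left hint1 (by positivity : (0:ℝ) ≤ (2*π)⁻¹)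
    rw [show (2*π)⁻¹ * (((SmInt m 1)⁻¹)^q * (2*π*((Nat.centralBinom s : ℝ)/4^s)))
        = ((2*π)⁻¹ * (2*π)) * (((SmInt m 1)⁻¹)^q * ((Nat.centralBinom s : ℝ)/4^s)) by ring] at h1
    rw [inv_mul_cancel₀ twopi_pos.ne', one_mul] at h1
    exact h1
  have hcbnn : (0:ℝ) ≤ (Nat.centralBinom s : ℝ)/4^s := by positivity
  calc ((2*π)⁻¹ * ∫ x in (0:ℝ)..(2*π),
        ‖(0:ℂ) - ((-(SmInt m 1)⁻¹ * (Real.cos ((m:ℝ)*x))^(2*m+1) : ℝ) : ℂ)‖ ^ q) ^ q⁻¹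
      ≤ (((SmInt m 1)⁻¹)^q * ((Nat.centralBinom s : ℝ)/4^s)) ^ q⁻¹ :=
        Real.rpow_le_rpow (mul_nonneg (by positivity) (integrand_nonneg _ _)) hbase
          (by positivity)
    _ = (SmInt m 1)⁻¹ * (((Nat.centralBinom s : ℝ)/4^s)) ^ q⁻¹ := by
        rw [Real.mul_rpow (Real.rpow_nonneg hc'pos.le _) hcbnn,
          ← Real.rpow_mul hc'pos.le, mul_inv_cancel₀ hq.ne', Real.rpow_one]
    _ ≤ ((8/3) * Real.sqrt m) * ((Real.sqrt (3*((s:ℕ):ℝ)+1))⁻¹) ^ q⁻¹ := by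
        apply mul_le_mul (SmInt_inv_le hm1)
          (Real.rpow_le_rpow hcbnn (cb_le s) (by positivity))
          (Real.rpow_nonneg hcbnn _) (by positivity)

end HF
end HFaux

/-- failure of convergence in `H_p^{1,1}` for `0 < p < 1`, Proposition 3.1. -/
theorem holder_convergence_fails (p : ℝ≥0∞) (hp0 : 0 < p) (hp1 : p < 1) :
    ∃ f g : ℝ → ℂ, ∃ T : ℕ → ℝ → ℂ, MemLp' p f ∧ MemLp' p g ∧
      (∀ n : ℕ, IsTrigPoly n (T n)) ∧
      Filter.Tendsto (fun n : ℕ => LpNorm p (fun x => f x - T n x)) Filter.atTop (nhds 0) ∧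
      Filter.Tendsto (fun n : ℕ => LpNorm p (fun x => g x - deriv (T n) x))
        Filter.atTop (nhds 0) ∧
      ∃ Cf > (0:ℝ), ∃ N : ℕ, ∀ n : ℕ, N ≤ n →
        Cf ≤ holderNorm p 1 1 (fun x => f x - T n x) := by
  classical
  have hpt : p ≠ ⊤ := ne_top_of_lt hp1
  have hq : 0 < p.toReal := ENNReal.toReal_pos hp0.ne' hpt
  have hq1 : p.toReal < 1 := by
    have h := (ENNReal.toReal_lt_toReal hpt ENNReal.one_ne_top).mpr hp1
    simpa using h
  set q := p.toReal with hqd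
  have hmem : MemLp' p (fun _ => (0:ℂ)) := by
    constructor
    · intro x; rfl
    · rw [if_neg hpt]
      refine ⟨measurable_const, ?_⟩
      have hz : IntervalIntegrable (fun _ : ℝ => (0:ℝ)) volume 0 (2*π) :=
        intervalIntegrable_const
      simpa [Real.zero_rpow hq.ne'] using hz
  have kto := HF.kseq_tendsto
  have hk3 : ∀ᶠ n in atTop, 3 ≤ HF.kseq n := kto.eventually (eventually_ge_atTop 3)
  refine ⟨fun _ => 0, fun _ => 0, HF.Tpoly, hmem, hmem, HF.Tpoly_trig, ?_, ?_, ?_⟩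
  · -- ‖f - T n‖ → 0
    apply squeeze_zero' (g := fun n => ((HF.kseq n : ℝ))⁻¹)
    · filter_upwards with n
      exact HF.lpnorm_nonneg hpt _
    · filter_upwards [hk3] with n h3
      have hfn : (fun x => (fun _ => (0:ℂ)) x - HF.Tpoly n x)
          = fun x => -(HF.Tgood (HF.kseq n) x) := by
        funext x
        simp [HF.Tpoly, h3]
      rw [hfn]
      apply HF.lpnorm_le_bound hpt hq ((HF.cont_Tgood _).neg) (by positivity)
      intro x
      rw [show ‖(-HF.Tgood (HF.kseq n)) x‖
          = ‖HF.Tgood (HF.kseq n) x‖ from norm_neg _]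
      exact HF.Tgood_abs_le (by omega) x
    · exact tendsto_inv_atTop_zero.comp (tendsto_natCast_atTop_atTop.comp kto)
  · -- ‖g - (T n)'‖ → 0
    set e : ℝ := (2*q)⁻¹ - 1/2 with hed
    have h2q : (0:ℝ) < 2*q := by positivity
    have he : 0 < e := by
      rw [hed]
      have h1 : (1:ℝ)/2 < (2*q)⁻¹ := by
        rw [show ((2:ℝ)*q)⁻¹ = 1/(2*q) from (one_div _).symm, lt_div_iff₀ h2q]
        nlinarith
      linarith
    set C : ℝ := (8/3) * q^(-(2*q)⁻¹) with hCd
    have hcomb : ∀ m : ℕ, 3 ≤ m →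
        (8/3) * Real.sqrt m * ((Real.sqrt (3*((⌊(m:ℝ)*q⌋₊ : ℕ):ℝ)+1))⁻¹) ^ q⁻¹
          ≤ C * (m:ℝ) ^ (-e) := by
      intro m hm
      have hmR : (0:ℝ) < m := by exact_mod_cast (by omega : 0 < m)
      have hqm : (0:ℝ) < (m:ℝ)*q := by positivity
      have hfl : (m:ℝ)*q ≤ 3*((⌊(m:ℝ)*q⌋₊:ℕ):ℝ)+1 := by
        have h1 : (m:ℝ)*q < (⌊(m:ℝ)*q⌋₊:ℝ) + 1 := Nat.lt_floor_add_one _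
        have h2 : (0:ℝ) ≤ ((⌊(m:ℝ)*q⌋₊:ℕ):ℝ) := by positivity
        push_cast
        push_cast at h1 h2
        linarith
      have hsqm : Real.sqrt ((m:ℝ)*q) ≤ Real.sqrt (3*((⌊(m:ℝ)*q⌋₊:ℕ):ℝ)+1) :=
        Real.sqrt_le_sqrt hfl
      have hsqpos : 0 < Real.sqrt ((m:ℝ)*q) := Real.sqrt_pos.mpr hqm
      have hinv : (Real.sqrt (3*((⌊(m:ℝ)*q⌋₊:ℕ):ℝ)+1))⁻¹ ≤ (Real.sqrt ((m:ℝ)*q))⁻¹ :=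
        inv_anti₀ hsqpos hsqm
      have hrp : ((Real.sqrt (3*((⌊(m:ℝ)*q⌋₊:ℕ):ℝ)+1))⁻¹) ^ q⁻¹
          ≤ ((Real.sqrt ((m:ℝ)*q))⁻¹) ^ q⁻¹ :=
        Real.rpow_le_rpow (by positivity) hinv (by positivity)
      have hval : ((Real.sqrt ((m:ℝ)*q))⁻¹) ^ q⁻¹ = ((m:ℝ)*q) ^ (-(2*q)⁻¹) := by
        rw [Real.sqrt_eq_rpow, ← Real.rpow_neg hqm.le, ← Real.rpow_mul hqm.le]
        congr 1
        rw [mul_inv]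
        ring
      have hsplit2 : ((m:ℝ)*q) ^ (-(2*q)⁻¹) = (m:ℝ)^(-(2*q)⁻¹) * q^(-(2*q)⁻¹) :=
        Real.mul_rpow hmR.le hq.le
      have hm12 : Real.sqrt (m:ℝ) = (m:ℝ)^((1:ℝ)/2) := Real.sqrt_eq_rpow _
      calc (8/3) * Real.sqrt m * ((Real.sqrt (3*((⌊(m:ℝ)*q⌋₊ : ℕ):ℝ)+1))⁻¹) ^ q⁻¹
          ≤ (8/3) * Real.sqrt m * (((m:ℝ)*q)^(-(2*q)⁻¹)) := by
            rw [← hval]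
            apply mul_le_mul_of_nonneg_left hrp (by positivity)
        _ = C * ((m:ℝ)^((1:ℝ)/2) * (m:ℝ)^(-(2*q)⁻¹)) := by
            rw [hsplit2, hm12, hCd]
            ring
        _ = C * (m:ℝ)^(-e) := by
            rw [← Real.rpow_add hmR]
            congr 1
            rw [hed]
            ring
    apply squeeze_zero' (g := fun n => C * ((HF.kseq n : ℝ)) ^ (-e))
    · filter_upwards with n
      exact HF.lpnorm_nonneg hpt _
    · filter_upwards [hk3] with n h3
      have hfd : (fun x => (fun _ => (0:ℂ)) x - deriv (HF.Tpoly n) x)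
          = fun x => (0:ℂ) - ((-(HF.SmInt (HF.kseq n) 1)⁻¹
              * (Real.cos ((HF.kseq n:ℝ)*x))^(2*(HF.kseq n)+1) : ℝ) : ℂ) := by
        funext x
        have hTp : HF.Tpoly n = HF.Tgood (HF.kseq n) := by
          simp [HF.Tpoly, h3]
        rw [hTp, (HF.Tgood_hasDeriv (by omega) x).deriv]
      rw [hfd]
      exact le_trans (HF.lp_deriv_bound hpt hq h3) (hcomb _ h3)
    · have h1 : Tendsto (fun x : ℝ => x ^ (-e)) atTop (𝓝 0) := tendsto_rpow_neg_atTop he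
      have h2 : Tendsto (fun n : ℕ => ((HF.kseq n : ℝ))) atTop atTop :=
        tendsto_natCast_atTop_atTop.comp kto
      have h3 := (h1.comp h2).const_mul C
      simpa using h3
  · -- Hölder norm lower bound
    refine ⟨(3:ℝ)^(-(q)⁻¹)/π, by positivity, ?_⟩
    obtain ⟨N₀, hN₀⟩ := eventually_atTop.mp hk3
    refine ⟨N₀, fun n hn => ?_⟩
    have h3 : 3 ≤ HF.kseq n := hN₀ n hn
    set m := HF.kseq n with hmd
    have hm1 : 1 ≤ m := by omega
    have hS := HF.SmInt_one_pos hm1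
    have hmR : (0:ℝ) < m := by exact_mod_cast (by omega : 0 < m)
    have hpi := Real.pi_pos
    have hfn : (fun x => (fun _ => (0:ℂ)) x - HF.Tpoly n x)
        = fun x => -(HF.Tgood m x) := by
      funext x
      simp [HF.Tpoly, ← hmd, h3]
    rw [hfn]
    unfold holderNorm
    have hnn : 0 ≤ LpNorm p (fun x => -(HF.Tgood m x)) := HF.lpnorm_nonneg hpt _
    have hsemi : (3:ℝ)^(-(q)⁻¹)/π ≤ holderSemi p 1 1 (fun x => -(HF.Tgood m x)) := by
      unfold holderSemi
      have hpos : (0:ℝ) < π/m := by positivity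
      have hub : ∀ h : {h : ℝ // 0 < h},
          LpNorm p (delta h.1 1 (fun x => -(HF.Tgood m x))) / h.1 ^ (1:ℝ)
            ≤ (HF.SmInt m 1)⁻¹ := by
        intro h
        rw [Real.rpow_one, div_le_iff₀ h.2]
        have hd : delta h.1 1 (fun x => -(HF.Tgood m x))
            = fun x => HF.Tgood m (x + h.1) - HF.Tgood m x := by
          rw [HF.delta_one]
          funext x
          ring
        rw [hd]
        have hcont2 : Continuous (fun x : ℝ => HF.Tgood m (x + h.1) - HF.Tgood m x) :=
          ((HF.cont_Tgood m).comp (continuous_id.add continuous_const)).sub (HF.cont_Tgood m)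
        apply HF.lpnorm_le_bound hpt hq hcont2
          (mul_nonneg (inv_nonneg.mpr hS.le) h.2.le)
        intro x
        rw [show HF.Tgood m (x+h.1) - HF.Tgood m x
            = -(HF.Tgood m x - HF.Tgood m (x+h.1)) by ring, norm_neg]
        calc ‖HF.Tgood m x - HF.Tgood m (x+h.1)‖
            ≤ (HF.SmInt m 1)⁻¹ * |h.1| := HF.Tgood_lip hm1 x h.1
          _ = (HF.SmInt m 1)⁻¹ * h.1 := by rw [abs_of_pos h.2]
      have hBdd : BddAbove (Set.range fun h : {h : ℝ // 0 < h} =>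
          LpNorm p (delta h.1 1 (fun x => -(HF.Tgood m x))) / h.1 ^ (1:ℝ)) := by
        refine ⟨(HF.SmInt m 1)⁻¹, ?_⟩
        rintro y ⟨h, rfl⟩
        exact hub h
      have hval : (3:ℝ)^(-(q)⁻¹)/π
          ≤ LpNorm p (delta (π/m) 1 (fun x => -(HF.Tgood m x))) / (π/m : ℝ) ^ (1:ℝ) := by
        rw [Real.rpow_one]
        have hd : delta (π/m) 1 (fun x => -(HF.Tgood m x))
            = fun x => ((-2:ℂ)) * HF.Tgood m x := by
          rw [HF.delta_one]
          funext x
          rw [HF.Tgood_anti hm1 x]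
          ring_nf
        rw [hd, HF.lpnorm_const_mul hpt hq]
        rw [show ‖(-2 : ℂ)‖ = 2 by simp]
        have hT : (HF.Tgood m) = fun x =>
            ((-(m:ℝ)⁻¹ : ℝ) : ℂ) * ((HF.smf m (Real.sin ((m:ℝ)*x)) : ℝ) : ℂ) := by
          funext x
          unfold HF.Tgood
          push_cast
          ring
        rw [hT, HF.lpnorm_const_mul hpt hq]
        rw [show ‖((-(m:ℝ)⁻¹ : ℝ) : ℂ)‖ = (m:ℝ)⁻¹ by
          rw [Complex.norm_real, Real.norm_eq_abs, abs_neg, abs_inv, Nat.abs_cast]]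
        have hlow := HF.lp_smf_lower hpt hq h3
        set L := LpNorm p (fun x => ((HF.smf m (Real.sin ((m:ℝ)*x)) : ℝ) : ℂ)) with hLd
        have hre : 2 * ((m:ℝ)⁻¹ * L) / (π/(m:ℝ)) = 2 * L / π := by
          field_simp
        rw [hre, div_le_div_iff₀ hpi hpi]
        nlinarith [hlow]
      calc (3:ℝ)^(-(q)⁻¹)/π
          ≤ LpNorm p (delta (π/m) 1 (fun x => -(HF.Tgood m x))) / (π/m : ℝ) ^ (1:ℝ) := hval
        _ ≤ ⨆ h : {h : ℝ // 0 < h},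
              LpNorm p (delta h.1 1 (fun x => -(HF.Tgood m x))) / h.1 ^ (1:ℝ) :=
            le_ciSup hBdd ⟨π/m, hpos⟩
    linarith
end

section
/- Let 1≤p≤∞, r∈ℕ, and 0<α≤r. Let {L_n} be a sequence of Fourier means L_n(f,x) = ∫_𝕋 f(t)K_n(x−t)dt generated by kernels K_n(x) = Σ_{ν=−n}^{n} a_{ν,n} e^{iνx} with a_{0,n}=1, whose operator norms on L_p are uniformly bounded in n. Let w∈Ω_p, and suppose there are constants c₀,C₀>0 such that c₀·w(f,1/n)_p ≤ ‖f−L_n(f)‖_p ≤ C₀·w(f,1/n)_p for all f∈L_p and n∈ℕ. Then there exist constants c,C>0, independent of f and n, such that for every f∈H_p^{r,α} and n∈ℕ: c·w(f,1/n)_{H_p^{r,α}} ≤ ‖f−L_n(f)‖_{H_p^{r,α}} ≤ C·w(f,1/n)_{H_p^{r,α}}. -/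
open MeasureTheory Real Filter
open scoped ENNReal NNReal Topology

section Aux

open MeasureTheory Real Function intervalIntegral

private lemma aux_le_one_add_rpow {x q : ℝ} (hx : 0 ≤ x) (hq : 1 ≤ q) : x ≤ 1 + x ^ q := by
  rcases le_total x 1 with h | h
  · nlinarith [Real.rpow_nonneg hx q]
  · have h1 : x ^ (1:ℝ) ≤ x ^ q := Real.rpow_le_rpow_of_exponent_le h hq
    rw [Real.rpow_one] at h1
    linarith

private lemma aux_sum_rpow_le {ι : Type*} (s : Finset ι) (b : ι → ℝ)
    (hb : ∀ i ∈ s, 0 ≤ b i) {q : ℝ} (hq : 1 ≤ q) :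
    (∑ i ∈ s, b i) ^ q ≤ (s.card : ℝ) ^ q * ∑ i ∈ s, b i ^ q := by
  rcases s.eq_empty_or_nonempty with rfl | hne
  · simp [Real.zero_rpow (by linarith : q ≠ 0)]
  · have hq0 : (0:ℝ) ≤ q := by linarith
    have hS0 : 0 ≤ ∑ i ∈ s, b i := Finset.sum_nonneg hb
    have hcard : (0:ℝ) < s.card := by exact_mod_cast hne.card_pos
    obtain ⟨i₀, hi₀, hbi⟩ : ∃ i ∈ s, (∑ i ∈ s, b i) / s.card ≤ b i := by
      by_contra hcon
      push_neg at hcon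
      have h1 : ∑ i ∈ s, b i < ∑ i ∈ s, (∑ j ∈ s, b j) / s.card :=
        Finset.sum_lt_sum_of_nonempty hne fun i hi => hcon i hi
      rw [Finset.sum_const, nsmul_eq_mul,
        mul_div_cancel₀ _ (by exact_mod_cast hne.card_pos.ne' : (s.card : ℝ) ≠ 0)] at h1
      exact lt_irrefl _ h1
    have h1 : ((∑ i ∈ s, b i) / s.card) ^ q ≤ b i₀ ^ q :=
      Real.rpow_le_rpow (by positivity) hbi hq0
    have h2 : b i₀ ^ q ≤ ∑ i ∈ s, b i ^ q :=
      Finset.single_le_sum (fun i hi => Real.rpow_nonneg (hb i hi) q) hi₀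
    rw [Real.div_rpow hS0 hcard.le] at h1
    have hcq : (0:ℝ) < (s.card:ℝ) ^ q := Real.rpow_pos_of_pos hcard q
    calc (∑ i ∈ s, b i) ^ q = (s.card:ℝ)^q * ((∑ i ∈ s, b i)^q / (s.card:ℝ)^q) := by
          field_simp
      _ ≤ (s.card:ℝ)^q * ∑ i ∈ s, b i ^ q :=
          mul_le_mul_of_nonneg_left (h1.trans h2) hcq.le

private lemma aux_periodic_II {g : ℝ → ℝ} (hg : Function.Periodic g (2*π))
    (h0 : IntervalIntegrable g volume 0 (2*π)) (a : ℝ) :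
    IntervalIntegrable g volume a (a + 2*π) := by
  have hT : (0:ℝ) < 2*π := by positivity
  have hper : ∀ m : ℤ, IntervalIntegrable g volume ((m:ℝ)*(2*π)) ((m:ℝ)*(2*π) + 2*π) := by
    intro m
    have h1 := h0.comp_add_right (-((m:ℝ)*(2*π)))
    have h2 : (fun x => g (x + -((m:ℝ)*(2*π)))) = g := by
      funext x
      have h3 := (hg.int_mul (-m)) x
      push_cast at h3
      rw [show x + -((m:ℝ)*(2*π)) = x + -(m:ℝ)*(2*π) by ring]
      exact h3
    rw [h2] at h1
    have e0 : (0:ℝ) - -((m:ℝ)*(2*π)) = (m:ℝ)*(2*π) := by ring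
    have e1 : (2*π:ℝ) - -((m:ℝ)*(2*π)) = (m:ℝ)*(2*π) + 2*π := by ring
    rwa [e0, e1] at h1
  set m : ℤ := ⌊a / (2*π)⌋ with hm
  have hma : (m:ℝ) * (2*π) ≤ a := by
    rw [← le_div_iff₀ hT, hm]
    exact Int.floor_le _
  have hma2 : a < ((m:ℝ)+1) * (2*π) := by
    have h5 : a / (2*π) < (m:ℝ) + 1 := by
      rw [hm]
      exact_mod_cast Int.lt_floor_add_one (a / (2*π))
    calc a = a / (2*π) * (2*π) := by field_simp
      _ < ((m:ℝ)+1) * (2*π) := by nlinarith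
  have h2 := hper (m+1)
  rw [show (((m+1 : ℤ)):ℝ) = (m:ℝ)+1 by push_cast; ring] at h2
  have h12 : IntervalIntegrable g volume ((m:ℝ)*(2*π)) (((m:ℝ)+1)*(2*π) + 2*π) := by
    refine (hper m).trans ?_
    rwa [show (m:ℝ)*(2*π) + 2*π = ((m:ℝ)+1)*(2*π) by ring]
  refine h12.mono_set ?_
  rw [Set.uIcc_of_le (by linarith), Set.uIcc_of_le (by nlinarith)]
  exact Set.Icc_subset_Icc (by linarith) (by nlinarith)

private lemma aux_translate_II {g : ℝ → ℝ} (hg : Function.Periodic g (2*π))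
    (h0 : IntervalIntegrable g volume 0 (2*π)) (c : ℝ) :
    IntervalIntegrable (fun x => g (x + c)) volume 0 (2*π) := by
  have h1 := (aux_periodic_II hg h0 c).comp_add_right c
  have e0 : c - c = (0:ℝ) := by ring
  have e1 : c + 2*π - c = (2*π:ℝ) := by ring
  rwa [e0, e1] at h1

private lemma aux_abs_rpow_translate_II {f : ℝ → ℂ} (hper : Function.Periodic f (2*π)) {q : ℝ}
    (hint : IntervalIntegrable (fun x => ‖f x‖ ^ q) volume 0 (2*π)) (a : ℝ) :
    IntervalIntegrable (fun t => ‖f (t + a)‖ ^ q) volume 0 (2*π) :=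
  aux_translate_II (fun x => by simp [hper x]) hint a

private lemma aux_measurable_delta {f : ℝ → ℂ} (hf : Measurable f) (h : ℝ) (r : ℕ) :
    Measurable (delta h r f) :=
  Finset.measurable_sum _ fun ν _ => ((hf.comp (measurable_add_const _))).const_mul _

private lemma aux_memLp'_delta {p : ℝ≥0∞} (hp : 1 ≤ p) {f : ℝ → ℂ} (hf : MemLp' p f)
    (h : ℝ) (r : ℕ) : MemLp' p (delta h r f) := by
  obtain ⟨hper, hrest⟩ := hf
  constructor
  · intro x
    unfold delta
    refine Finset.sum_congr rfl fun ν _ => ?_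
    rw [show x + 2*π + (ν:ℝ)*h = (x + (ν:ℝ)*h) + 2*π by ring, hper]
  · by_cases hpt : p = ⊤
    · rw [if_pos hpt] at hrest ⊢
      exact continuous_finset_sum _ fun ν _ =>
        continuous_const.mul (hrest.comp (continuous_add_right _))
    · rw [if_neg hpt] at hrest ⊢
      obtain ⟨hmeas, hint⟩ := hrest
      have hq : (1:ℝ) ≤ p.toReal := by
        rw [← ENNReal.toReal_one]
        exact ENNReal.toReal_mono hpt hp
      refine ⟨aux_measurable_delta hmeas h r, ?_⟩
      have hdom : IntervalIntegrable
          (fun t => ((2:ℝ)^r * (r+1 : ℕ))^p.toReal *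
            ∑ ν ∈ Finset.range (r+1), ‖f (t + (ν:ℝ)*h)‖ ^ p.toReal)
          volume 0 (2*π) := by
        refine IntervalIntegrable.const_mul ?_ _
        have h1 : ∀ ν ∈ Finset.range (r+1), IntervalIntegrable
            (fun t => ‖f (t + (ν:ℝ)*h)‖ ^ p.toReal) volume 0 (2*π) :=
          fun ν _ => aux_abs_rpow_translate_II hper hint _
        have h2 := IntervalIntegrable.sum (Finset.range (r+1)) h1
        have h3 : (∑ ν ∈ Finset.range (r+1), fun t => ‖f (t + (ν:ℝ)*h)‖ ^ p.toReal)
            = fun t => ∑ ν ∈ Finset.range (r+1), ‖f (t + (ν:ℝ)*h)‖ ^ p.toReal := by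
          funext t
          simp
        rwa [h3] at h2
      refine hdom.mono_fun ?_ ?_
      · exact ((Real.continuous_rpow_const (by linarith)).measurable.comp
          (continuous_norm.measurable.comp
            (aux_measurable_delta hmeas h r))).aestronglyMeasurable
      · refine Filter.Eventually.of_forall fun t => ?_
        dsimp only
        have h1 : ‖delta h r f t‖
            ≤ (2:ℝ)^r * ∑ ν ∈ Finset.range (r+1), ‖f (t + (ν:ℝ)*h)‖ := by
          unfold delta
          refine le_trans (norm_sum_le _ _) ?_
          rw [Finset.mul_sum]
          refine Finset.sum_le_sum fun ν hν => ?_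
          rw [norm_mul, norm_mul, norm_pow]
          simp only [norm_neg, norm_one, one_pow, one_mul, Complex.norm_natCast]
          have hch : (r.choose ν : ℝ) ≤ (2:ℝ)^r := by
            have h4 : r.choose ν ≤ 2^r := by
              calc r.choose ν ≤ ∑ i ∈ Finset.range (r+1), r.choose i :=
                    Finset.single_le_sum (fun i _ => Nat.zero_le _) hν
                _ = 2^r := Nat.sum_range_choose r
            exact_mod_cast h4
          exact mul_le_mul_of_nonneg_right hch (norm_nonneg _)
        have hsum0 : (0:ℝ) ≤ ∑ ν ∈ Finset.range (r+1), ‖f (t + (ν:ℝ)*h)‖ :=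
          Finset.sum_nonneg fun ν _ => norm_nonneg _
        have hsum0' : (0:ℝ) ≤ ∑ ν ∈ Finset.range (r+1), ‖f (t + (ν:ℝ)*h)‖ ^ p.toReal :=
          Finset.sum_nonneg fun ν _ => Real.rpow_nonneg (norm_nonneg _) _
        have hlhs0 : (0:ℝ) ≤ ‖delta h r f t‖ ^ p.toReal :=
          Real.rpow_nonneg (norm_nonneg _) _
        have h2r0 : (0:ℝ) ≤ (2:ℝ)^r := by positivity
        have hkey : ‖delta h r f t‖ ^ p.toReal
            ≤ ((2:ℝ)^r * (r+1 : ℕ))^p.toReal *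
              ∑ ν ∈ Finset.range (r+1), ‖f (t + (ν:ℝ)*h)‖ ^ p.toReal := by
          calc ‖delta h r f t‖ ^ p.toReal
              ≤ ((2:ℝ)^r * ∑ ν ∈ Finset.range (r+1), ‖f (t + (ν:ℝ)*h)‖) ^ p.toReal :=
                Real.rpow_le_rpow (norm_nonneg _) h1 (by linarith)
            _ = ((2:ℝ)^r)^p.toReal *
                  (∑ ν ∈ Finset.range (r+1), ‖f (t + (ν:ℝ)*h)‖) ^ p.toReal :=
                Real.mul_rpow h2r0 hsum0
            _ ≤ ((2:ℝ)^r)^p.toReal *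
                  (((r+1 : ℕ) : ℝ)^p.toReal *
                    ∑ ν ∈ Finset.range (r+1), ‖f (t + (ν:ℝ)*h)‖ ^ p.toReal) := by
                refine mul_le_mul_of_nonneg_left ?_ (Real.rpow_nonneg h2r0 _)
                have := aux_sum_rpow_le (Finset.range (r+1))
                  (fun ν => ‖f (t + (ν:ℝ)*h)‖)
                  (fun ν _ => norm_nonneg _) hq
                rwa [Finset.card_range] at this
            _ = ((2:ℝ)^r * (r+1 : ℕ))^p.toReal *
                  ∑ ν ∈ Finset.range (r+1), ‖f (t + (ν:ℝ)*h)‖ ^ p.toReal := by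
                rw [Real.mul_rpow h2r0 (by positivity)]
                ring
        have hnorm1 : ‖‖delta h r f t‖ ^ p.toReal‖
            = ‖delta h r f t‖ ^ p.toReal := Real.norm_of_nonneg hlhs0
        have hnorm2 : ‖((2:ℝ)^r * (r+1 : ℕ))^p.toReal *
            ∑ ν ∈ Finset.range (r+1), ‖f (t + (ν:ℝ)*h)‖ ^ p.toReal‖
            = ((2:ℝ)^r * (r+1 : ℕ))^p.toReal *
              ∑ ν ∈ Finset.range (r+1), ‖f (t + (ν:ℝ)*h)‖ ^ p.toReal :=
          Real.norm_of_nonneg (mul_nonneg (Real.rpow_nonneg (by positivity) _) hsum0')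
        rw [hnorm1, hnorm2]
        exact hkey

private lemma aux_kernel_facts {K : ℕ → ℝ → ℂ} (hK : IsKernel K) (n : ℕ) :
    Continuous (K n) ∧ Function.Periodic (K n) (2 * π) ∧
      ∃ M : ℝ, 0 ≤ M ∧ ∀ y, ‖K n y‖ ≤ M := by
  obtain ⟨a, _, ha⟩ := hK n
  have habs1 : ∀ (ν : ℤ) (y : ℝ), ‖Complex.exp (Complex.I * ν * y)‖ = 1 := by
    intro ν y
    rw [Complex.norm_exp]
    have : (Complex.I * (ν:ℂ) * (y:ℝ)).re = 0 := by
      simp [Complex.mul_re, Complex.mul_im]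
    rw [this, Real.exp_zero]
  refine ⟨?_, ?_, ∑ ν ∈ Finset.Icc (-(n:ℤ)) (n:ℤ), ‖a ν‖,
    Finset.sum_nonneg fun ν _ => norm_nonneg _, ?_⟩
  · have hfe : K n = fun x : ℝ =>
        ∑ ν ∈ Finset.Icc (-(n:ℤ)) (n:ℤ), a ν * Complex.exp (Complex.I * ν * x) := funext ha
    rw [hfe]
    exact continuous_finset_sum _ fun ν _ =>
      continuous_const.mul (Complex.continuous_exp.comp
        (continuous_const.mul Complex.continuous_ofReal))
  · intro x
    rw [ha, ha]
    refine Finset.sum_congr rfl fun ν _ => ?_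
    congr 1
    rw [show Complex.I * ν * ((x + 2*π : ℝ) : ℂ)
        = Complex.I * ν * (x:ℝ) + ν * (2 * (π:ℂ) * Complex.I) by push_cast; ring]
    rw [Complex.exp_add, Complex.exp_int_mul_two_pi_mul_I, mul_one]
  · intro y
    rw [ha]
    refine le_trans (norm_sum_le _ _) ?_
    refine Finset.sum_le_sum fun ν _ => ?_
    rw [norm_mul, habs1 ν y, mul_one]

private lemma aux_integrand_II {p : ℝ≥0∞} (hp : 1 ≤ p) {f : ℝ → ℂ} (hf : MemLp' p f)
    {K : ℕ → ℝ → ℂ} (hK : IsKernel K) (n : ℕ) (a x : ℝ) :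
    IntervalIntegrable (fun t => f (t + a) * K n (x - t)) volume 0 (2*π) := by
  obtain ⟨hKc, hKper, M, hM0, hM⟩ := aux_kernel_facts hK n
  by_cases hpt : p = ⊤
  · have hfc : Continuous f := by
      have := hf.2
      rwa [if_pos hpt] at this
    exact ((hfc.comp (continuous_add_right a)).mul
      (hKc.comp (continuous_const.sub continuous_id))).intervalIntegrable _ _
  · have hrest := hf.2
    rw [if_neg hpt] at hrest
    obtain ⟨hfm, hfi⟩ := hrest
    have hq : (1:ℝ) ≤ p.toReal := by
      rw [← ENNReal.toReal_one]
      exact ENNReal.toReal_mono hpt hp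
    have hmeas : Measurable fun t => f (t + a) * K n (x - t) :=
      (hfm.comp (measurable_add_const a)).mul
        (hKc.measurable.comp (measurable_const.sub measurable_id))
    have hdom : IntervalIntegrable
        (fun t => M * (1 + ‖f (t + a)‖ ^ p.toReal)) volume 0 (2*π) :=
      (intervalIntegrable_const.add (aux_abs_rpow_translate_II hf.1 hfi a)).const_mul M
    refine hdom.mono_fun hmeas.aestronglyMeasurable ?_
    refine Filter.Eventually.of_forall fun t => ?_
    dsimp only
    have h1 : ‖f (t + a) * K n (x - t)‖
        = ‖f (t + a)‖ * ‖K n (x - t)‖ := by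
      rw [norm_mul]
    have h2 : (0:ℝ) ≤ 1 + ‖f (t + a)‖ ^ p.toReal := by
      have := Real.rpow_nonneg (norm_nonneg (f (t + a))) p.toReal
      linarith
    have h3 : ‖M * (1 + ‖f (t + a)‖ ^ p.toReal)‖
        = M * (1 + ‖f (t + a)‖ ^ p.toReal) :=
      Real.norm_of_nonneg (mul_nonneg hM0 h2)
    rw [h1, h3]
    calc ‖f (t + a)‖ * ‖K n (x - t)‖
        ≤ (1 + ‖f (t + a)‖ ^ p.toReal) * M :=
          mul_le_mul (aux_le_one_add_rpow (norm_nonneg _) hq) (hM _)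
            (norm_nonneg _) h2
      _ = M * (1 + ‖f (t + a)‖ ^ p.toReal) := by ring

private lemma aux_fmean_translate {p : ℝ≥0∞} (hp : 1 ≤ p) {f : ℝ → ℂ} (hf : MemLp' p f)
    {K : ℕ → ℝ → ℂ} (hK : IsKernel K) (n : ℕ) (a x : ℝ) :
    (∫ t in (0:ℝ)..(2*π), f (t + a) * K n (x - t)) = Fmean K n f (x + a) := by
  obtain ⟨hKc, hKper, M, hM0, hM⟩ := aux_kernel_facts hK n
  have hgper : Function.Periodic (fun s => f s * K n (x + a - s)) (2*π) := by
    intro s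
    simp only
    rw [hf.1 s, show x + a - (s + 2*π) = (x + a - s) - 2*π by ring, hKper.sub_eq]
  calc (∫ t in (0:ℝ)..(2*π), f (t + a) * K n (x - t))
      = ∫ t in (0:ℝ)..(2*π), (fun s => f s * K n (x + a - s)) (t + a) := by
        refine intervalIntegral.integral_congr fun t _ => ?_
        simp only
        rw [show x + a - (t + a) = x - t by ring]
    _ = ∫ s in (0+a)..(2*π+a), f s * K n (x + a - s) :=
        intervalIntegral.integral_comp_add_right (fun s => f s * K n (x + a - s)) a
    _ = ∫ s in a..(a + 2*π), f s * K n (x + a - s) := by rw [zero_add, add_comm (2*π) a]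
    _ = ∫ s in (0:ℝ)..(0 + 2*π), f s * K n (x + a - s) := hgper.intervalIntegral_add_eq a 0
    _ = Fmean K n f (x + a) := by rw [zero_add]; rfl

private lemma aux_fmean_delta_comm {p : ℝ≥0∞} (hp : 1 ≤ p) {f : ℝ → ℂ} (hf : MemLp' p f)
    {K : ℕ → ℝ → ℂ} (hK : IsKernel K) (n : ℕ) (h : ℝ) (r : ℕ) (x : ℝ) :
    Fmean K n (delta h r f) x = delta h r (Fmean K n f) x := by
  have hII : ∀ ν : ℕ, IntervalIntegrable
      (fun t => (-1:ℂ)^ν * ((r.choose ν : ℂ) * (f (t + (ν:ℝ)*h) * K n (x - t))))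
      volume 0 (2*π) := by
    intro ν
    exact ((aux_integrand_II hp hf hK n ((ν:ℝ)*h) x).const_mul
      ((r.choose ν : ℂ))).const_mul ((-1:ℂ)^ν)
  unfold Fmean delta
  simp only [Finset.sum_mul, mul_assoc]
  rw [intervalIntegral.integral_finset_sum (fun ν _ => hII ν)]
  refine Finset.sum_congr rfl fun ν _ => ?_
  rw [intervalIntegral.integral_const_mul, intervalIntegral.integral_const_mul,
    aux_fmean_translate hp hf hK n ((ν:ℝ)*h) x]
  rfl

private lemma aux_delta_error {p : ℝ≥0∞} (hp : 1 ≤ p) {f : ℝ → ℂ} (hf : MemLp' p f)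
    {K : ℕ → ℝ → ℂ} (hK : IsKernel K) (n : ℕ) (h : ℝ) (r : ℕ) :
    delta h r (fun x => f x - Fmean K n f x)
      = fun x => delta h r f x - Fmean K n (delta h r f) x := by
  funext x
  rw [aux_fmean_delta_comm hp hf hK n h r x]
  simp [delta, mul_sub, Finset.sum_sub_distrib]

end Aux
/-- Theorem 4.2: strong converse inequality in `H_p^{r,α}`, `1 ≤ p ≤ ∞`,
for Fourier means. -/
theorem strong_converse_fourier (p : ℝ≥0∞) (hp : 1 ≤ p) (r : ℕ) (hr : 0 < r)
    (α : ℝ) (hα0 : 0 < α) (hαr : α ≤ (r : ℝ))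
    (K : ℕ → ℝ → ℂ) (hK : IsKernel K)
    (hbdd : ∃ B : ℝ, ∀ n : ℕ, 0 < n → ∀ f : ℝ → ℂ, MemLp' p f →
      LpNorm p (Fmean K n f) ≤ B * LpNorm p f)
    (w : (ℝ → ℂ) → ℝ → ℝ) (hw : IsOmegaClass p w)
    (hequiv : ∃ c₀ > (0:ℝ), ∃ C₀ > (0:ℝ), ∀ f : ℝ → ℂ, MemLp' p f → ∀ n : ℕ, 0 < n →
      c₀ * w f (1 / (n : ℝ)) ≤ LpNorm p (fun x => f x - Fmean K n f x) ∧
        LpNorm p (fun x => f x - Fmean K n f x) ≤ C₀ * w f (1 / (n : ℝ))) :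
    ∃ c > (0:ℝ), ∃ C > (0:ℝ), ∀ f : ℝ → ℂ, MemHolderSp p r α f → ∀ n : ℕ, 0 < n →
      c * wHolder w r α f (1 / (n : ℝ)) ≤
          holderNorm p r α (fun x => f x - Fmean K n f x) ∧
        holderNorm p r α (fun x => f x - Fmean K n f x) ≤
          C * wHolder w r α f (1 / (n : ℝ)) := by
  classical
  obtain ⟨c₀, hc₀, C₀, hC₀, heq⟩ := hequiv
  obtain ⟨Cw, hCw, hw1, hw2⟩ := hw
  refine ⟨c₀, hc₀, C₀, hC₀, ?_⟩
  intro f hf n hn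
  haveI : Nonempty {h : ℝ // 0 < h} := ⟨⟨1, one_pos⟩⟩
  obtain ⟨hfm, hbA⟩ := hf
  have hδ : 0 < 1 / (n:ℝ) := by
    have : (0:ℝ) < n := by exact_mod_cast hn
    positivity
  have hdm : ∀ h' : ℝ, MemLp' p (delta h' r f) := fun h' => aux_memLp'_delta hp hfm h' r
  have key : ∀ h' : ℝ, delta h' r (fun x => f x - Fmean K n f x)
      = fun x => delta h' r f x - Fmean K n (delta h' r f) x :=
    fun h' => aux_delta_error hp hfm hK n h' r
  have keyN : ∀ h' : ℝ, LpNorm p (delta h' r (fun x => f x - Fmean K n f x))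
      = LpNorm p (fun x => delta h' r f x - Fmean K n (delta h' r f) x) :=
    fun h' => by rw [key h']
  have heqd := fun h' : ℝ => heq (delta h' r f) (hdm h') n hn
  have hw0 := fun h' : ℝ => hw1 (delta h' r f) (hdm h') (1/(n:ℝ)) hδ
  -- division bound: `w(Δ_h f, 1/n)/h^α ≤ Cw * S`
  have hwdiv : ∀ h : {h : ℝ // 0 < h},
      w (delta h.1 r f) (1/(n:ℝ)) / h.1 ^ α
        ≤ Cw * (⨆ h : {h : ℝ // 0 < h}, LpNorm p (delta h.1 r f) / h.1 ^ α) := by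
    intro h
    have hp' : (0:ℝ) < h.1 ^ α := Real.rpow_pos_of_pos h.2 α
    calc w (delta h.1 r f) (1/(n:ℝ)) / h.1 ^ α
        ≤ (Cw * LpNorm p (delta h.1 r f)) / h.1 ^ α :=
          (div_le_div_iff_of_pos_right hp').mpr (hw0 h.1).2
      _ = Cw * (LpNorm p (delta h.1 r f) / h.1 ^ α) := by ring
      _ ≤ Cw * (⨆ h : {h : ℝ // 0 < h}, LpNorm p (delta h.1 r f) / h.1 ^ α) :=
          mul_le_mul_of_nonneg_left (le_ciSup hbA h) hCw.le
  have bddW : BddAbove (Set.range fun h : {h : ℝ // 0 < h} =>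
      w (delta h.1 r f) (1/(n:ℝ)) / h.1 ^ α) := by
    refine ⟨Cw * (⨆ h : {h : ℝ // 0 < h}, LpNorm p (delta h.1 r f) / h.1 ^ α), ?_⟩
    rintro y ⟨h, rfl⟩
    exact hwdiv h
  have bddE : BddAbove (Set.range fun h : {h : ℝ // 0 < h} =>
      LpNorm p (delta h.1 r (fun x => f x - Fmean K n f x)) / h.1 ^ α) := by
    refine ⟨C₀ * (Cw * (⨆ h : {h : ℝ // 0 < h}, LpNorm p (delta h.1 r f) / h.1 ^ α)), ?_⟩
    rintro y ⟨h, rfl⟩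
    have hp' : (0:ℝ) < h.1 ^ α := Real.rpow_pos_of_pos h.2 α
    dsimp only
    rw [keyN h.1]
    calc LpNorm p (fun x => delta h.1 r f x - Fmean K n (delta h.1 r f) x) / h.1 ^ α
        ≤ (C₀ * w (delta h.1 r f) (1/(n:ℝ))) / h.1 ^ α :=
          (div_le_div_iff_of_pos_right hp').mpr (heqd h.1).2
      _ = C₀ * (w (delta h.1 r f) (1/(n:ℝ)) / h.1 ^ α) := by ring
      _ ≤ C₀ * (Cw * (⨆ h : {h : ℝ // 0 < h}, LpNorm p (delta h.1 r f) / h.1 ^ α)) :=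
          mul_le_mul_of_nonneg_left (hwdiv h) hC₀.le
  have upper2 : holderSemi p r α (fun x => f x - Fmean K n f x)
      ≤ C₀ * (⨆ h : {h : ℝ // 0 < h}, w (delta h.1 r f) (1/(n:ℝ)) / h.1 ^ α) := by
    refine ciSup_le fun h => ?_
    have hp' : (0:ℝ) < h.1 ^ α := Real.rpow_pos_of_pos h.2 α
    rw [keyN h.1]
    calc LpNorm p (fun x => delta h.1 r f x - Fmean K n (delta h.1 r f) x) / h.1 ^ α
        ≤ (C₀ * w (delta h.1 r f) (1/(n:ℝ))) / h.1 ^ α :=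
          (div_le_div_iff_of_pos_right hp').mpr (heqd h.1).2
      _ = C₀ * (w (delta h.1 r f) (1/(n:ℝ)) / h.1 ^ α) := by ring
      _ ≤ C₀ * (⨆ h : {h : ℝ // 0 < h}, w (delta h.1 r f) (1/(n:ℝ)) / h.1 ^ α) :=
          mul_le_mul_of_nonneg_left (le_ciSup bddW h) hC₀.le
  have lower2 : (⨆ h : {h : ℝ // 0 < h}, w (delta h.1 r f) (1/(n:ℝ)) / h.1 ^ α)
      ≤ c₀⁻¹ * holderSemi p r α (fun x => f x - Fmean K n f x) := by
    refine ciSup_le fun h => ?_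
    have hp' : (0:ℝ) < h.1 ^ α := Real.rpow_pos_of_pos h.2 α
    have h1 : c₀ * w (delta h.1 r f) (1/(n:ℝ))
        ≤ LpNorm p (delta h.1 r (fun x => f x - Fmean K n f x)) := by
      rw [keyN h.1]
      exact (heqd h.1).1
    have h3 : w (delta h.1 r f) (1/(n:ℝ))
        ≤ c₀⁻¹ * LpNorm p (delta h.1 r (fun x => f x - Fmean K n f x)) := by
      calc w (delta h.1 r f) (1/(n:ℝ))
          = c₀⁻¹ * (c₀ * w (delta h.1 r f) (1/(n:ℝ))) := by
            field_simp
        _ ≤ c₀⁻¹ * LpNorm p (delta h.1 r (fun x => f x - Fmean K n f x)) :=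
            mul_le_mul_of_nonneg_left h1 (by positivity)
    have h2 : LpNorm p (delta h.1 r (fun x => f x - Fmean K n f x)) / h.1 ^ α
        ≤ holderSemi p r α (fun x => f x - Fmean K n f x) := le_ciSup bddE h
    calc w (delta h.1 r f) (1/(n:ℝ)) / h.1 ^ α
        ≤ (c₀⁻¹ * LpNorm p (delta h.1 r (fun x => f x - Fmean K n f x))) / h.1 ^ α :=
          (div_le_div_iff_of_pos_right hp').mpr h3
      _ = c₀⁻¹ * (LpNorm p (delta h.1 r (fun x => f x - Fmean K n f x)) / h.1 ^ α) := by ring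
      _ ≤ c₀⁻¹ * holderSemi p r α (fun x => f x - Fmean K n f x) :=
          mul_le_mul_of_nonneg_left h2 (by positivity)
  have hmain := heq f hfm n hn
  constructor
  · -- lower bound
    have hA : c₀ * w f (1/(n:ℝ)) ≤ LpNorm p (fun x => f x - Fmean K n f x) := hmain.1
    have hB : c₀ * (⨆ h : {h : ℝ // 0 < h}, w (delta h.1 r f) (1/(n:ℝ)) / h.1 ^ α)
        ≤ holderSemi p r α (fun x => f x - Fmean K n f x) := by
      have := mul_le_mul_of_nonneg_left lower2 hc₀.le
      rwa [← mul_assoc, mul_inv_cancel₀ hc₀.ne', one_mul] at this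
    show c₀ * wHolder w r α f (1/(n:ℝ)) ≤ holderNorm p r α (fun x => f x - Fmean K n f x)
    unfold wHolder holderNorm
    rw [mul_add]
    exact add_le_add hA hB
  · show holderNorm p r α (fun x => f x - Fmean K n f x) ≤ C₀ * wHolder w r α f (1/(n:ℝ))
    unfold wHolder holderNorm
    rw [mul_add]
    exact add_le_add hmain.2 upper2
end
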